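/- arXiv:1602.06969 — 10 statements merged into one kernel-verified Lean document; each statement's English description precedes it below -/
import Mathlib

section
/- Let d ≥ 1 and let U be a d×d complex unitary matrix. Then U Δ(ρ) U† = Δ(U ρ U†) for every d×d complex matrix ρ if and only if U is an incoherent unitary, i.e., there exist a permutation π of Fin d and real phases θ_x such that U_{y x} = e^{iθ_x} when y = π(x) and U_{y x} = 0 otherwise. -/
open Matrix

/-- The dephasing map: zeroes out all off-diagonal entries. -/
def deph {d : ℕ} (ρ : Matrix (Fin d) (Fin d) ℂ) : Matrix (Fin d) (Fin d) ℂ :=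
  Matrix.diagonal fun x => ρ x x

lemma exp_mul_conj (θ : ℝ) :
    Complex.exp (Complex.I * θ) * star (Complex.exp (Complex.I * θ)) = 1 := by
  rw [Complex.star_def, ← Complex.exp_conj, ← Complex.exp_add]
  have h : Complex.I * (θ : ℂ) + (starRingEnd ℂ) (Complex.I * θ) = 0 := by
    simp only [_root_.map_mul, Complex.conj_I, Complex.conj_ofReal]; ring
  rw [h, Complex.exp_zero]

/-- A unitary `U` commutes with the dephasing map iff `U` is an incoherent unitary,
i.e. `U = Σ_x e^{iθ_x} |π(x)⟩⟨x|` for a permutation `π` and real phases `θ`. -/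
theorem stmt_0 (d : ℕ) (hd : 1 ≤ d) (U : Matrix (Fin d) (Fin d) ℂ)
    (hU : U ∈ Matrix.unitaryGroup (Fin d) ℂ) :
    (∀ ρ : Matrix (Fin d) (Fin d) ℂ, U * deph ρ * Uᴴ = deph (U * ρ * Uᴴ)) ↔
      ∃ (π : Equiv.Perm (Fin d)) (θ : Fin d → ℝ),
        ∀ y x, U y x = if y = π x then Complex.exp (Complex.I * (θ x : ℂ)) else 0 := by
  have hUU : Uᴴ * U = 1 := by
    have := Matrix.mem_unitaryGroup_iff'.mp hU
    rwa [Matrix.star_eq_conjTranspose] at this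
  constructor
  · intro h
    -- key: each column of U has a single nonzero entry
    have key : ∀ x y z, y ≠ z → U y x * (starRingEnd ℂ) (U z x) = 0 := by
      intro x y z hyz
      have := (Matrix.ext_iff.mpr (h (Matrix.single x x 1))) y z
      rw [deph, deph] at this
      rw [Matrix.diagonal_apply_ne _ hyz] at this
      rw [Matrix.mul_apply] at this
      simp only [Matrix.mul_diagonal, Matrix.conjTranspose_apply,
        Matrix.single, Matrix.of_apply, and_self, mul_ite, mul_one, mul_zero,
        ite_mul, zero_mul] at this
      rw [Finset.sum_ite_eq] at this
      simpa using this
    have hcol : ∀ x, ∃ y, U y x ≠ 0 := by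
      intro x
      by_contra hc
      push_neg at hc
      have h1 := (Matrix.ext_iff.mpr hUU) x x
      rw [Matrix.mul_apply] at h1
      simp [Matrix.conjTranspose_apply, hc, Matrix.one_apply] at h1
    set f : Fin d → Fin d := fun x => (hcol x).choose with hf
    have hfne : ∀ x, U (f x) x ≠ 0 := fun x => (hcol x).choose_spec
    have hzero : ∀ x z, z ≠ f x → U z x = 0 := by
      intro x z hz
      have := key x (f x) z (fun e => hz e.symm)
      rcases mul_eq_zero.mp this with h' | h'
      · exact absurd h' (hfne x)
      · simpa using h'
    have finj : Function.Injective f := by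
      intro x1 x2 hx
      by_contra hne
      have h1 := (Matrix.ext_iff.mpr hUU) x1 x2
      rw [Matrix.one_apply_ne hne, Matrix.mul_apply] at h1
      rw [Finset.sum_eq_single (f x1)] at h1
      · rw [Matrix.conjTranspose_apply] at h1
        have hne2 : U (f x1) x2 ≠ 0 := by rw [hx]; exact hfne x2
        exact (mul_ne_zero (by simpa using hfne x1) hne2) h1
      · intro b _ hb
        rw [Matrix.conjTranspose_apply, hzero x1 b hb]
        simp
      · simp
    have fbij : Function.Bijective f := Finite.injective_iff_bijective.mp finj
    have habs : ∀ x, (starRingEnd ℂ) (U (f x) x) * U (f x) x = 1 := by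
      intro x
      have h1 := (Matrix.ext_iff.mpr hUU) x x
      rw [Matrix.mul_apply, Finset.sum_eq_single (f x)] at h1
      · rw [Matrix.conjTranspose_apply] at h1
        simpa using h1
      · intro b _ hb
        rw [Matrix.conjTranspose_apply, hzero x b hb]
        simp
      · simp
    refine ⟨Equiv.ofBijective f fbij, fun x => (U (f x) x).arg, fun y x => ?_⟩
    have hexp : U (f x) x = Complex.exp (Complex.I * ((U (f x) x).arg : ℂ)) := by
      have habs1 : ‖U (f x) x‖ = 1 := by
        have := habs x
        rw [Complex.conj_mul'] at this
        have h2 : ‖U (f x) x‖ ^ 2 = 1 := by exact_mod_cast this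
        nlinarith [norm_nonneg (U (f x) x)]
      conv_lhs => rw [← Complex.norm_mul_exp_arg_mul_I (U (f x) x)]
      rw [habs1, Complex.ofReal_one, one_mul, mul_comm]
    by_cases hy : y = f x
    · subst hy
      simp only [Equiv.ofBijective_apply, if_pos rfl]
      exact hexp
    · rw [hzero x y hy]
      simp only [Equiv.ofBijective_apply]
      rw [if_neg hy]
  · rintro ⟨π, θ, hform⟩ ρ
    ext y z
    have hL : (U * deph ρ * Uᴴ) y z = ∑ b, U y b * ρ b b * star (U z b) := by
      rw [Matrix.mul_apply]
      simp only [deph, Matrix.mul_diagonal, Matrix.conjTranspose_apply]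
    have hR : ∀ w, (U * ρ * Uᴴ) w w = ρ (π.symm w) (π.symm w) := by
      intro w
      rw [Matrix.mul_apply]
      have hrow : ∀ b, (U * ρ) w b =
          Complex.exp (Complex.I * θ (π.symm w)) * ρ (π.symm w) b := by
        intro b
        rw [Matrix.mul_apply, Finset.sum_eq_single (π.symm w)]
        · rw [hform, if_pos (π.apply_symm_apply w).symm]
        · intro c _ hc
          rw [hform, if_neg (fun e => hc (by rw [e, Equiv.symm_apply_apply])), zero_mul]
        · simp
      simp only [hrow, Matrix.conjTranspose_apply]
      rw [Finset.sum_eq_single (π.symm w)]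
      · rw [hform, if_pos (π.apply_symm_apply w).symm, mul_right_comm, exp_mul_conj,
          one_mul]
      · intro c _ hc
        rw [hform, if_neg (fun e => hc (by rw [e, Equiv.symm_apply_apply])), star_zero,
          mul_zero]
      · simp
    rw [hL]
    have lhs_eq : ∑ b, U y b * ρ b b * star (U z b)
        = if y = z then ρ (π.symm y) (π.symm y) else 0 := by
      by_cases hyz : y = z
      · subst hyz
        rw [if_pos rfl, Finset.sum_eq_single (π.symm y)]
        · rw [hform, if_pos (π.apply_symm_apply y).symm, mul_right_comm, exp_mul_conj,
            one_mul]
        · intro c _ hc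
          rw [hform, if_neg (fun e => hc (by rw [e, Equiv.symm_apply_apply])), zero_mul,
            zero_mul]
        · simp
      · rw [if_neg hyz, Finset.sum_eq_zero]
        intro b _
        by_cases hyb : y = π b
        · have hzb : z ≠ π b := fun e => hyz (hyb.trans e.symm)
          rw [hform z b, if_neg hzb, star_zero, mul_zero]
        · rw [hform y b, if_neg hyb, zero_mul, zero_mul]
    rw [lhs_eq]
    by_cases hyz : y = z
    · subst hyz
      rw [if_pos rfl, deph, Matrix.diagonal_apply_eq, hR]
    · rw [if_neg hyz, deph, Matrix.diagonal_apply_ne _ hyz]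
end

section
/- Let M be a d×d complex matrix. Then M Δ(X) M† = Δ(M X M†) holds for every d×d complex matrix X if and only if M is an SIO Kraus operator, i.e., there exist a permutation π of Fin d and coefficients c : Fin d → ℂ such that M = Σ_x c_x |π(x)⟩⟨x|. -/
open Matrix

/-- An SIO Kraus operator: `M = Σ_x c_x |π(x)⟩⟨x|` for a permutation `π` and
coefficients `c`. -/
def IsSIOKraus {d : ℕ} (M : Matrix (Fin d) (Fin d) ℂ) : Prop :=
  ∃ (π : Equiv.Perm (Fin d)) (c : Fin d → ℂ),
    M = ∑ x, Matrix.single (π x) x (c x)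

lemma sum_std_apply {d : ℕ} (π : Equiv.Perm (Fin d)) (c : Fin d → ℂ) (a b : Fin d) :
    (∑ x, Matrix.single (π x) x (c x)) a b = if a = π b then c b else 0 := by
  rw [Matrix.sum_apply]
  rw [Finset.sum_eq_single b]
  · simp [Matrix.single, Matrix.of_apply, eq_comm, and_comm]
  · intro x _ hx; simp [Matrix.single, Matrix.of_apply, hx, Ne.symm hx]
  · simp

/-- `M Δ(X) M† = Δ(M X M†)` for all `X` iff `M` is an SIO Kraus operator. -/
theorem stmt_2 (d : ℕ) (M : Matrix (Fin d) (Fin d) ℂ) :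
    (∀ X : Matrix (Fin d) (Fin d) ℂ, M * deph X * Mᴴ = deph (M * X * Mᴴ)) ↔
      IsSIOKraus M := by
  constructor
  · intro h
    classical
    -- Column condition: each column has at most one nonzero entry.
    have hcol : ∀ z a b : Fin d, a ≠ b → M a z * star (M b z) = 0 := by
      intro z a b hab
      have hX := h (Matrix.single z z 1)
      have hd : deph (Matrix.single z z 1) = Matrix.single z z 1 := by
        ext i j
        simp only [deph, Matrix.diagonal_apply, Matrix.single, Matrix.of_apply]
        by_cases hij : i = j
        · subst hij; simp
        · rw [if_neg hij]
          symm; rw [ite_eq_right_iff]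
          rintro ⟨rfl, rfl⟩; exact absurd rfl hij
      rw [hd] at hX
      have := congrFun (congrFun hX a) b
      rw [show deph (M * Matrix.single z z 1 * Mᴴ) a b = 0 by
        simp [deph, Matrix.diagonal_apply, hab]] at this
      rw [Matrix.mul_apply] at this
      simp only [Matrix.mul_apply] at this
      have key : ∀ k, (∑ l, M a l * Matrix.single z z 1 l k) * Mᴴ k b
          = (if k = z then M a z * star (M b z) else 0) := by
        intro k
        rcases eq_or_ne k z with rfl | hk
        · simp only [if_pos rfl]
          rw [Finset.sum_eq_single k]
          · simp [Matrix.single, Matrix.of_apply, Matrix.conjTranspose_apply]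
          · intro l _ hl; simp [Matrix.single, Matrix.of_apply, Ne.symm hl]
          · simp
        · rw [if_neg hk]
          have : ∀ l, M a l * Matrix.single z z 1 l k = 0 := by
            intro l
            simp [Matrix.single, Matrix.of_apply, Ne.symm hk]
          simp [this]
      rw [Finset.sum_congr rfl (fun k _ => key k)] at this
      simpa using this
    -- Row condition: each row has at most one nonzero entry.
    have hrow : ∀ a z w : Fin d, z ≠ w → M a z * star (M a w) = 0 := by
      intro a z w hzw
      have hX := h (Matrix.single z w 1)
      have hd : deph (Matrix.single z w 1) = 0 := by
        ext i j
        simp only [deph, Matrix.diagonal_apply, Matrix.single, Matrix.of_apply,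
          Matrix.zero_apply]
        by_cases hij : i = j
        · rw [if_pos hij, ite_eq_right_iff]
          rintro ⟨rfl, rfl⟩; exact absurd rfl hzw
        · rw [if_neg hij]
      rw [hd] at hX
      have this : ((M * Matrix.single z w 1 * Mᴴ) : Matrix (Fin d) (Fin d) ℂ) a a
          = 0 := by
        have h0 := (congrFun (congrFun hX.symm a) a)
        simp only [deph, Matrix.diagonal_apply_eq] at h0
        rw [h0]
        simp
      rw [Matrix.mul_apply] at this
      simp only [Matrix.mul_apply] at this
      have key : ∀ k, (∑ l, M a l * Matrix.single z w 1 l k) * Mᴴ k a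
          = (if k = w then M a z * star (M a k) else 0) := by
        intro k
        rcases eq_or_ne k w with rfl | hk
        · simp only [if_pos rfl]
          rw [Finset.sum_eq_single z]
          · simp [Matrix.single, Matrix.of_apply, Matrix.conjTranspose_apply]
          · intro l _ hl; simp [Matrix.single, Matrix.of_apply, Ne.symm hl]
          · simp
        · have : ∀ l, M a l * Matrix.single z w 1 l k = 0 := by
            intro l
            simp [Matrix.single, Matrix.of_apply, Ne.symm hk]
          simp [this, hk]
      rw [Finset.sum_congr rfl (fun k _ => key k)] at this
      simp only [Finset.sum_ite_eq', Finset.mem_univ, if_pos] at this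
      simpa using this
    -- Build the permutation.
    set P : Fin d → Prop := fun x => ∃ a, M a x ≠ 0 with hP
    set Q : Fin d → Prop := fun a => ∃ x, M a x ≠ 0 with hQ
    set g : {x // P x} → {a // Q a} := fun x =>
      ⟨Classical.choose x.2, ⟨x.1, Classical.choose_spec x.2⟩⟩ with hgdef
    have hg : ∀ x : {x // P x}, M (g x).1 x.1 ≠ 0 := fun x => Classical.choose_spec x.2
    have hgbij : Function.Bijective g := by
      constructor
      · rintro x₁ x₂ hx
        by_contra hne
        have hne' : x₁.1 ≠ x₂.1 := fun h => hne (Subtype.ext h)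
        have h1 := hg x₁
        have h2 := hg x₂
        rw [hx] at h1
        have := hrow (g x₂).1 x₁.1 x₂.1 hne'
        rcases mul_eq_zero.mp this with h | h
        · exact h1 h
        · exact h2 (by simpa using h)
      · rintro ⟨a, x, hx⟩
        have hPx : P x := ⟨a, hx⟩
        refine ⟨⟨x, hPx⟩, Subtype.ext ?_⟩
        have hch := hg ⟨x, hPx⟩
        show (g ⟨x, hPx⟩).1 = a
        by_contra hne
        have := hcol x (g ⟨x, hPx⟩).1 a hne
        rcases mul_eq_zero.mp this with h | h
        · exact hch h
        · exact hx (by simpa using h)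
    let e1 : {x // P x} ≃ {a // Q a} := Equiv.ofBijective g hgbij
    have hcard : Fintype.card {x // ¬ P x} = Fintype.card {a // ¬ Q a} := by
      rw [Fintype.card_subtype_compl, Fintype.card_subtype_compl,
        Fintype.card_congr e1]
    let e2 : {x // ¬ P x} ≃ {a // ¬ Q a} := Fintype.equivOfCardEq hcard
    let π : Equiv.Perm (Fin d) :=
      (Equiv.sumCompl P).symm.trans ((Equiv.sumCongr e1 e2).trans (Equiv.sumCompl Q))
    have hπpos : ∀ x (hx : P x), π x = (g ⟨x, hx⟩).1 := by
      intro x hx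
      simp only [π, Equiv.trans_apply, Equiv.sumCompl_symm_apply_of_pos hx,
        Equiv.sumCongr_apply, Sum.map_inl, Equiv.sumCompl_apply_inl, e1,
        Equiv.ofBijective_apply]
    have hπneg : ∀ x, ¬ P x → ¬ Q (π x) := by
      intro x hx
      simp only [π, Equiv.trans_apply, Equiv.sumCompl_symm_apply_of_neg hx,
        Equiv.sumCongr_apply, Sum.map_inr, Equiv.sumCompl_apply_inr]
      exact (e2 ⟨x, hx⟩).2
    refine ⟨π, fun x => M (π x) x, ?_⟩
    ext a b
    rw [sum_std_apply]
    rcases eq_or_ne a (π b) with rfl | hab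
    · simp
    · rw [if_neg hab]
      by_cases hPb : P b
      · have hMb : M (π b) b ≠ 0 := by rw [hπpos b hPb]; exact hg ⟨b, hPb⟩
        have := hcol b a (π b) hab
        rcases mul_eq_zero.mp this with h | h
        · exact h
        · exact absurd (by simpa using h) hMb
      · by_contra hMab
        exact hPb ⟨a, hMab⟩
  · rintro ⟨π, c, rfl⟩ X
    set N : Matrix (Fin d) (Fin d) ℂ := ∑ x, Matrix.single (π x) x (c x) with hN
    have hNa : ∀ a b, N a b = if a = π b then c b else 0 := sum_std_apply π c
    have hmul : ∀ (A : Matrix (Fin d) (Fin d) ℂ) a b,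
        (N * A) a b = c (π.symm a) * A (π.symm a) b := by
      intro A a b
      rw [Matrix.mul_apply, Finset.sum_eq_single (π.symm a)]
      · rw [hNa]; simp
      · intro k _ hk
        rw [hNa, if_neg, zero_mul]
        intro h
        exact hk (by rw [h, Equiv.symm_apply_apply])
      · simp
    have hmulh : ∀ (A : Matrix (Fin d) (Fin d) ℂ) a b,
        (A * Nᴴ) a b = A a (π.symm b) * star (c (π.symm b)) := by
      intro A a b
      rw [Matrix.mul_apply, Finset.sum_eq_single (π.symm b)]
      · rw [Matrix.conjTranspose_apply, hNa]; simp
      · intro k _ hk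
        rw [Matrix.conjTranspose_apply, hNa, if_neg, star_zero, mul_zero]
        intro h
        exact hk (by rw [h, Equiv.symm_apply_apply])
      · simp
    ext a b
    rw [hmulh, hmul]
    rcases eq_or_ne a b with rfl | hab
    · rw [show deph (N * X * Nᴴ) a a = (N * X * Nᴴ) a a by
        simp [deph, Matrix.diagonal_apply]]
      rw [hmulh, hmul]
      simp [deph, Matrix.diagonal_apply]
    · have h1 : deph X (π.symm a) (π.symm b) = 0 := by
        simp only [deph, Matrix.diagonal_apply]
        rw [if_neg]
        intro h
        exact hab (by simpa using π.symm.injective h)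
      have h2 : deph (N * X * Nᴴ) a b = 0 := by
        simp [deph, Matrix.diagonal_apply, hab]
      rw [h1, h2, mul_zero, zero_mul]
end

section
/- Let ψ, φ ∈ ℂ^d be unit vectors and set p_x = |ψ_x|² and q_x = |φ_x|². The following are equivalent: (i) there exists a finite family (M_α) of SIO Kraus operators on ℂ^d with Σ_α M_α† M_α = I such that for each α there is a scalar c_α ∈ ℂ with M_α ψ = c_α φ (so the corresponding SIO channel maps ψψ† to φφ†); (ii) the vector p is majorized by q, i.e., there exists a d×d doubly stochastic matrix D (nonnegative entries, every row sum and column sum equal to 1) with p = D q. -/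
open Matrix

lemma sio_apply {d : ℕ} (π : Equiv.Perm (Fin d)) (c : Fin d → ℂ) (i j : Fin d) :
    (∑ x, Matrix.single (π x) x (c x)) i j = if i = π j then c j else 0 := by
  simp only [Matrix.sum_apply, Matrix.single, Matrix.of_apply]
  rw [Finset.sum_eq_single j]
  · simp [eq_comm]
  · intro b _ hb; simp [hb]
  · simp

lemma sio_mulVec {d : ℕ} (π : Equiv.Perm (Fin d)) (c v : Fin d → ℂ) (i : Fin d) :
    ((∑ x, Matrix.single (π x) x (c x)) *ᵥ v) i
      = c (π.symm i) * v (π.symm i) := by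
  simp only [Matrix.mulVec, dotProduct, sio_apply]
  rw [Finset.sum_eq_single (π.symm i)]
  · simp
  · intro b _ hb
    rw [if_neg, zero_mul]
    intro h; exact hb (by simp [h])
  · simp

lemma sio_ct_mul {d : ℕ} (π : Equiv.Perm (Fin d)) (c : Fin d → ℂ) :
    (∑ x, Matrix.single (π x) x (c x))ᴴ * (∑ x, Matrix.single (π x) x (c x))
      = Matrix.diagonal (fun x => (Complex.normSq (c x) : ℂ)) := by
  ext a b
  simp only [Matrix.mul_apply, Matrix.conjTranspose_apply, sio_apply, Matrix.diagonal_apply]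
  rw [Finset.sum_eq_single (π a)]
  · by_cases h : a = b
    · subst h
      simp [mul_comm, Complex.mul_conj]
    · rw [if_neg h, if_pos rfl, if_neg (fun hh => h (π.injective hh)), mul_zero]
  · intro i _ hi
    rw [if_neg hi]
    simp
  · simp

/-- The pure state `ψ` can be converted to `φ` by a strictly incoherent operation
iff `(|ψ_x|²)_x` is majorized by `(|φ_x|²)_x`, i.e. `p = D q` for some doubly
stochastic `D`. -/
theorem stmt_3 (d : ℕ) (ψ φ : Fin d → ℂ)
    (hψ : ∑ x, Complex.normSq (ψ x) = 1) (hφ : ∑ x, Complex.normSq (φ x) = 1) :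
    (∃ (n : ℕ) (M : Fin n → Matrix (Fin d) (Fin d) ℂ),
        (∀ α, IsSIOKraus (M α)) ∧ (∑ α, (M α)ᴴ * M α = 1) ∧
        ∀ α, ∃ c : ℂ, (M α).mulVec ψ = c • φ) ↔
    (∃ D : Matrix (Fin d) (Fin d) ℝ,
        (∀ i j, 0 ≤ D i j) ∧ (∀ i, ∑ j, D i j = 1) ∧ (∀ j, ∑ i, D i j = 1) ∧
        ∀ x, Complex.normSq (ψ x) = ∑ y, D x y * Complex.normSq (φ y)) := by
  constructor
  · rintro ⟨n, M, hK, hcomp, hconv⟩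
    choose π c hMeq using hK
    choose s hs using hconv
    have key : ∀ α x, c α x * ψ x = s α * φ (π α x) := by
      intro α x
      have := congrFun (hs α) (π α x)
      rw [hMeq α, sio_mulVec] at this
      simpa using this
    have keyN : ∀ α x, Complex.normSq (c α x) * Complex.normSq (ψ x)
        = Complex.normSq (s α) * Complex.normSq (φ (π α x)) := by
      intro α x
      have := congrArg Complex.normSq (key α x)
      simpa [Complex.normSq_mul] using this
    have hnorm : ∀ x, ∑ α, Complex.normSq (c α x) = 1 := by
      intro x
      have h1 : (∑ α, (M α)ᴴ * (M α)) x x = (1 : Matrix (Fin d) (Fin d) ℂ) x x := by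
        rw [hcomp]
      rw [Matrix.sum_apply] at h1
      have h2 : ∀ α, ((M α)ᴴ * M α) x x = (Complex.normSq (c α x) : ℂ) := by
        intro α; rw [hMeq α, sio_ct_mul]; simp
      simp only [h2, Matrix.one_apply_eq] at h1
      exact_mod_cast h1
    have hp : ∀ x, Complex.normSq (ψ x)
        = ∑ α, Complex.normSq (s α) * Complex.normSq (φ (π α x)) := by
      intro x
      calc Complex.normSq (ψ x)
          = (∑ α, Complex.normSq (c α x)) * Complex.normSq (ψ x) := by rw [hnorm x, one_mul]
        _ = ∑ α, Complex.normSq (c α x) * Complex.normSq (ψ x) := Finset.sum_mul _ _ _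
        _ = _ := Finset.sum_congr rfl fun α _ => keyN α x
    have hS : ∑ α, Complex.normSq (s α) = 1 := by
      have h1 : ∑ x, ∑ α, Complex.normSq (s α) * Complex.normSq (φ (π α x)) = 1 := by
        rw [← Finset.sum_congr rfl (fun x _ => hp x)]
        exact hψ
      rw [Finset.sum_comm] at h1
      calc ∑ α, Complex.normSq (s α)
          = ∑ α, Complex.normSq (s α) * ∑ x, Complex.normSq (φ (π α x)) := by
            refine Finset.sum_congr rfl fun α _ => ?_
            rw [Equiv.sum_comp (π α) (fun y => Complex.normSq (φ y)), hφ, mul_one]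
        _ = 1 := by
            rw [← h1]
            exact Finset.sum_congr rfl fun α _ => Finset.mul_sum _ _ _
    refine ⟨fun x y => ∑ α, if y = π α x then Complex.normSq (s α) else 0, ?_, ?_, ?_, ?_⟩
    · intro i j
      refine Finset.sum_nonneg fun α _ => ?_
      split
      · exact Complex.normSq_nonneg _
      · exact le_refl _
    · intro i
      rw [Finset.sum_comm]
      simp [hS]
    · intro j
      rw [Finset.sum_comm]
      have h3 : ∀ α : Fin n,
          ∑ x, (if j = π α x then Complex.normSq (s α) else 0) = Complex.normSq (s α) := by
        intro α
        rw [← Equiv.sum_comp (π α).symm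
          (fun x => if j = π α x then Complex.normSq (s α) else 0)]
        simp
      simp only [h3]
      exact hS
    · intro x
      rw [hp x]
      simp only [Finset.sum_mul, ite_mul, zero_mul]
      rw [Finset.sum_comm]
      simp
  · rintro ⟨D, hD0, hDrow, hDcol, hDmaj⟩
    have hDmem : D ∈ doublyStochastic ℝ (Fin d) := by
      rw [mem_doublyStochastic_iff_sum]
      exact ⟨hD0, hDrow, hDcol⟩
    obtain ⟨w, hw0, hw1, hwD⟩ := exists_eq_sum_perm_of_mem_doublyStochastic hDmem
    have hDxy : ∀ x y, D x y = ∑ σ : Equiv.Perm (Fin d), if σ x = y then w σ else 0 := by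
      intro x y
      rw [← hwD]
      simp [Matrix.sum_apply, Equiv.Perm.permMatrix, PEquiv.toMatrix_apply,
        Equiv.toPEquiv_apply, mul_ite, mul_one, mul_zero]
    have hmaj : ∀ x, Complex.normSq (ψ x)
        = ∑ σ : Equiv.Perm (Fin d), w σ * Complex.normSq (φ (σ x)) := by
      intro x
      rw [hDmaj x]
      simp only [hDxy, Finset.sum_mul, ite_mul, zero_mul]
      rw [Finset.sum_comm]
      simp
    obtain ⟨N, ⟨e⟩⟩ : ∃ N : ℕ, Nonempty (Fin N ≃ Equiv.Perm (Fin d)) :=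
      ⟨Fintype.card (Equiv.Perm (Fin d)), ⟨(Fintype.equivFin _).symm⟩⟩
    obtain ⟨C, hCdef⟩ : ∃ C : Equiv.Perm (Fin d) → Fin d → ℂ, C = fun σ x =>
        if ψ x = 0 then (Real.sqrt (w σ) : ℂ) else (Real.sqrt (w σ) : ℂ) * φ (σ x) / ψ x :=
      ⟨_, rfl⟩
    have hC : ∀ σ x, C σ x * ψ x = (Real.sqrt (w σ) : ℂ) * φ (σ x) := by
      intro σ x
      by_cases h : ψ x = 0
      · simp only [hCdef, if_pos h, h, mul_zero]
        have hx : (0:ℝ) = ∑ σ' : Equiv.Perm (Fin d), w σ' * Complex.normSq (φ (σ' x)) := by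
          rw [← hmaj x, h, map_zero]
        have h0 : w σ * Complex.normSq (φ (σ x)) = 0 := by
          have := (Finset.sum_eq_zero_iff_of_nonneg (fun σ' _ =>
            mul_nonneg (hw0 σ') (Complex.normSq_nonneg _))).1 hx.symm
          exact this σ (Finset.mem_univ σ)
        rcases mul_eq_zero.1 h0 with h1 | h1
        · rw [h1, Real.sqrt_zero]
          simp
        · rw [Complex.normSq_eq_zero.1 h1, mul_zero]
      · simp only [hCdef, if_neg h]
        exact div_mul_cancel₀ _ h
    have hCn : ∀ x, ∑ σ : Equiv.Perm (Fin d), Complex.normSq (C σ x) = 1 := by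
      intro x
      by_cases h : ψ x = 0
      · have h4 : ∀ σ : Equiv.Perm (Fin d), Complex.normSq (C σ x) = w σ := by
          intro σ
          simp only [hCdef, if_pos h, Complex.normSq_ofReal, Real.mul_self_sqrt (hw0 σ)]
        simp only [h4]
        exact hw1
      · have hpx : Complex.normSq (ψ x) ≠ 0 := fun hh => h (Complex.normSq_eq_zero.1 hh)
        have h4 : ∀ σ : Equiv.Perm (Fin d), Complex.normSq (C σ x)
            = w σ * Complex.normSq (φ (σ x)) / Complex.normSq (ψ x) := by
          intro σ
          simp only [hCdef, if_neg h, _root_.map_div₀, _root_.map_mul, Complex.normSq_ofReal,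
            Real.mul_self_sqrt (hw0 σ)]
        rw [Finset.sum_congr rfl fun σ _ => h4 σ, ← Finset.sum_div, ← hmaj x, div_self hpx]
    refine ⟨N, fun α => ∑ x, Matrix.single (e α x) x (C (e α) x), ?_, ?_, ?_⟩
    · intro α; exact ⟨e α, C (e α), rfl⟩
    · ext a b
      simp only [Matrix.sum_apply, sio_ct_mul, Matrix.diagonal_apply]
      by_cases h : a = b
      · subst h
        rw [Matrix.one_apply_eq]
        calc (∑ x : Fin N, if a = a then (Complex.normSq (C (e x) a) : ℂ) else 0)
            = ∑ x : Fin N, (Complex.normSq (C (e x) a) : ℂ) := by simp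
          _ = ∑ σ : Equiv.Perm (Fin d), (Complex.normSq (C σ a) : ℂ) :=
              Equiv.sum_comp e (fun σ => (Complex.normSq (C σ a) : ℂ))
          _ = 1 := by rw [← Complex.ofReal_sum, hCn a, Complex.ofReal_one]
      · rw [Matrix.one_apply_ne h]
        simp [h]
    · intro α
      refine ⟨(Real.sqrt (w (e α)) : ℂ), ?_⟩
      funext y
      rw [Matrix.mulVec, ← Matrix.mulVec]
      rw [sio_mulVec, hC]
      simp
end

section
/- Let (M_j) be a Kraus family of 2×2 complex matrices such that Σ_j M_j |x⟩⟨x| M_j† is diagonal for x ∈ {0,1}, and let E(ρ) = Σ_j M_j ρ M_j†. Then for every 2×2 density matrix ρ, C_{Δ,R}(E(ρ)) ≤ C_{Δ,R}(ρ), i.e., inf{t ≥ 0 : (1+t)Δ(E(ρ)) − E(ρ) is positive semidefinite} ≤ inf{t ≥ 0 : (1+t)Δ(ρ) − ρ is positive semidefinite}. -/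
open Matrix ComplexOrder

set_option maxHeartbeats 1000000

/-- The Δ-robustness of coherence
`C_{Δ,R}(ρ) = inf {t ≥ 0 : (1+t)Δ(ρ) − ρ ⪰ 0}`. -/
noncomputable def CDR {d : ℕ} (ρ : Matrix (Fin d) (Fin d) ℂ) : ℝ :=
  sInf {t : ℝ | 0 ≤ t ∧ (((1 + t : ℝ) : ℂ) • deph ρ - ρ).PosSemidef}

namespace Stmt7Aux

open Complex

lemma offdiag_sq (X : Matrix (Fin 2) (Fin 2) ℂ) (h : X.PosSemidef) :
    Complex.normSq (X 0 1) ≤ (X 0 0).re * (X 1 1).re := by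
  have hdet : (0:ℂ) ≤ X.det := by
    rw [h.1.det_eq_prod_eigenvalues]
    have : (0:ℝ) ≤ ∏ i, h.1.eigenvalues i := Finset.prod_nonneg fun i _ => h.eigenvalues_nonneg i
    norm_cast
  rw [Matrix.det_fin_two] at hdet
  have h10 : X 1 0 = starRingEnd ℂ (X 0 1) := (h.1.apply 1 0).symm
  have h00 : X 0 0 = ((X 0 0).re : ℂ) := (h.1.coe_re_apply_self 0).symm
  have h11 : X 1 1 = ((X 1 1).re : ℂ) := (h.1.coe_re_apply_self 1).symm
  rw [h10, h00, h11] at hdet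
  have := (Complex.nonneg_iff.mp hdet).1
  rw [Complex.normSq_apply]
  simpa [Complex.normSq_eq_conj_mul_self, Complex.mul_conj] using this

lemma diag_re_nonneg (X : Matrix (Fin 2) (Fin 2) ℂ) (h : X.PosSemidef) (i : Fin 2) :
    0 ≤ (X i i).re := by
  have := h.dotProduct_mulVec_nonneg (Pi.single i 1)
  simp [dotProduct, Matrix.mulVec, Pi.single_apply] at this
  exact (Complex.nonneg_iff.mp this).1

lemma psd2_of (X : Matrix (Fin 2) (Fin 2) ℂ) (hH : X.IsHermitian)
    (h00 : 0 ≤ (X 0 0).re) (h11 : 0 ≤ (X 1 1).re)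
    (hd : Complex.normSq (X 0 1) ≤ (X 0 0).re * (X 1 1).re) : X.PosSemidef := by
  refine Matrix.PosSemidef.of_dotProduct_mulVec_nonneg hH fun x => ?_
  have h10 : X 1 0 = starRingEnd ℂ (X 0 1) := (hH.apply 1 0).symm
  have h00' : X 0 0 = ((X 0 0).re : ℂ) := (hH.coe_re_apply_self 0).symm
  have h11' : X 1 1 = ((X 1 1).re : ℂ) := (hH.coe_re_apply_self 1).symm
  have e1 : dotProduct (star x) (X *ᵥ x) =
      (starRingEnd ℂ (x 0)) * (X 0 0 * x 0 + X 0 1 * x 1)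
      + (starRingEnd ℂ (x 1)) * (X 1 0 * x 0 + X 1 1 * x 1) := by
    simp [dotProduct, Matrix.mulVec, Fin.sum_univ_two]
  rw [e1, h10, h00', h11']
  rw [Complex.nonneg_iff]
  set r0 := (X 0 0).re
  set r1 := (X 1 1).re
  set p := X 0 1
  have him : ((starRingEnd ℂ (x 0)) * ((r0:ℂ) * x 0 + p * x 1)
      + (starRingEnd ℂ (x 1)) * ((starRingEnd ℂ p) * x 0 + (r1:ℂ) * x 1)).im = 0 := by
    simp [Complex.add_im, Complex.mul_im, Complex.conj_re, Complex.conj_im,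
      Complex.add_re, Complex.mul_re, Complex.ofReal_re, Complex.ofReal_im]
    ring
  have hre : ((starRingEnd ℂ (x 0)) * ((r0:ℂ) * x 0 + p * x 1)
      + (starRingEnd ℂ (x 1)) * ((starRingEnd ℂ p) * x 0 + (r1:ℂ) * x 1)).re
      = r0 * Complex.normSq (x 0) + r1 * Complex.normSq (x 1)
        + 2 * (p * (starRingEnd ℂ (x 0)) * (x 1)).re := by
    simp [Complex.add_im, Complex.mul_im, Complex.conj_re, Complex.conj_im,
      Complex.add_re, Complex.mul_re, Complex.ofReal_re, Complex.ofReal_im,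
      Complex.normSq_apply]
    ring
  refine ⟨?_, him.symm⟩
  rw [hre]
  have hn0 : 0 ≤ Complex.normSq (x 0) := Complex.normSq_nonneg _
  have hn1 : 0 ≤ Complex.normSq (x 1) := Complex.normSq_nonneg _
  have hK2 : (p * (starRingEnd ℂ (x 0)) * (x 1)).re ^ 2
      ≤ (r0 * Complex.normSq (x 0)) * (r1 * Complex.normSq (x 1)) := by
    have h1 : (p * (starRingEnd ℂ (x 0)) * (x 1)).re ^ 2
        + (p * (starRingEnd ℂ (x 0)) * (x 1)).im ^ 2
        = Complex.normSq p * Complex.normSq (x 0) * Complex.normSq (x 1) := by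
      simp [Complex.normSq_apply, Complex.mul_re, Complex.mul_im, Complex.conj_re,
        Complex.conj_im]
      ring
    nlinarith [sq_nonneg ((p * (starRingEnd ℂ (x 0)) * (x 1)).im),
      mul_nonneg hn0 hn1, Complex.normSq_nonneg p]
  nlinarith [hK2, sq_nonneg (r0 * Complex.normSq (x 0) - r1 * Complex.normSq (x 1)),
    mul_nonneg (mul_nonneg h00 hn0) (mul_nonneg h11 hn1),
    mul_nonneg h00 hn0, mul_nonneg h11 hn1]

lemma herm_comb {σ : Matrix (Fin 2) (Fin 2) ℂ} (h : σ.IsHermitian) (r : ℝ) :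
    (((r : ℝ) : ℂ) • deph σ - σ).IsHermitian := by
  have hd : (deph σ).IsHermitian := by
    apply Matrix.isHermitian_diagonal_of_self_adjoint
    funext i
    exact h.apply i i
  show _ᴴ = _
  rw [Matrix.conjTranspose_sub, Matrix.conjTranspose_smul, hd.eq, h.eq]
  norm_num

lemma chan_psd {n : ℕ} (M : Fin n → Matrix (Fin 2) (Fin 2) ℂ)
    {X : Matrix (Fin 2) (Fin 2) ℂ} (hX : X.PosSemidef) :
    (∑ j, M j * X * (M j)ᴴ).PosSemidef := by
  classical
  exact Finset.sum_induction _ _ (fun A B hA hB => hA.add hB) Matrix.PosSemidef.zero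
    (fun j _ => hX.mul_mul_conjTranspose_same (M j))

/-- the scalar sums describing the channel -/
noncomputable def T {n : ℕ} (M : Fin n → Matrix (Fin 2) (Fin 2) ℂ) (i k l m : Fin 2) : ℂ :=
  ∑ j, M j i l * starRingEnd ℂ (M j k m)

lemma chan_entry {n : ℕ} (M : Fin n → Matrix (Fin 2) (Fin 2) ℂ)
    (X : Matrix (Fin 2) (Fin 2) ℂ) (i k : Fin 2) :
    (∑ j, M j * X * (M j)ᴴ) i k =
      X 0 0 * T M i k 0 0 + X 0 1 * T M i k 0 1 + X 1 0 * T M i k 1 0 + X 1 1 * T M i k 1 1 := by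
  rw [Matrix.sum_apply]
  simp only [T, Finset.mul_sum]
  rw [← Finset.sum_add_distrib, ← Finset.sum_add_distrib, ← Finset.sum_add_distrib]
  refine Finset.sum_congr rfl fun j _ => ?_
  simp [Matrix.mul_apply, Fin.sum_univ_two, Matrix.conjTranspose_apply]
  ring

lemma T_swap {n : ℕ} (M : Fin n → Matrix (Fin 2) (Fin 2) ℂ) (i k l m : Fin 2) :
    T M i k l m = starRingEnd ℂ (T M k i m l) := by
  simp only [T, map_sum, _root_.map_mul, Complex.conj_conj]
  exact Finset.sum_congr rfl fun j _ => mul_comm _ _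

lemma T_diag_cast {n : ℕ} (M : Fin n → Matrix (Fin 2) (Fin 2) ℂ) (i l : Fin 2) :
    T M i i l l = ((∑ j, Complex.normSq (M j i l) : ℝ) : ℂ) := by
  simp only [T, Complex.mul_conj]
  norm_cast

lemma cs_bound {n : ℕ} (u v : Fin n → ℂ) :
    Complex.normSq (∑ j, u j * starRingEnd ℂ (v j))
      ≤ (∑ j, Complex.normSq (u j)) * (∑ j, Complex.normSq (v j)) := by
  have h1 : ‖∑ j, u j * starRingEnd ℂ (v j)‖
      ≤ ∑ j, ‖u j‖ * ‖v j‖ := by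
    calc ‖∑ j, u j * starRingEnd ℂ (v j)‖
        ≤ ∑ j, ‖u j * starRingEnd ℂ (v j)‖ :=
          norm_sum_le _ _
      _ = ∑ j, ‖u j‖ * ‖v j‖ := by
          refine Finset.sum_congr rfl fun j _ => ?_
          simp [_root_.map_mul]
  have h2 : (∑ j, ‖u j‖ * ‖v j‖) ^ 2
      ≤ (∑ j, ‖u j‖ ^ 2) * (∑ j, ‖v j‖ ^ 2) :=
    Finset.sum_mul_sq_le_sq_mul_sq _ _ _
  have h3 : Complex.normSq (∑ j, u j * starRingEnd ℂ (v j))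
      = ‖∑ j, u j * starRingEnd ℂ (v j)‖ ^ 2 := (Complex.sq_norm _).symm
  rw [h3]
  calc ‖∑ j, u j * starRingEnd ℂ (v j)‖ ^ 2
      ≤ (∑ j, ‖u j‖ * ‖v j‖) ^ 2 := by
        have h0 : 0 ≤ ‖∑ j, u j * starRingEnd ℂ (v j)‖ := norm_nonneg _
        nlinarith [h1, h0]
    _ ≤ (∑ j, ‖u j‖ ^ 2) * (∑ j, ‖v j‖ ^ 2) := h2
    _ = (∑ j, Complex.normSq (u j)) * (∑ j, Complex.normSq (v j)) := by
        simp [Complex.sq_norm]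

lemma T_cs {n : ℕ} (M : Fin n → Matrix (Fin 2) (Fin 2) ℂ) (i k l m : Fin 2) :
    Complex.normSq (T M i k l m)
      ≤ (∑ j, Complex.normSq (M j i l)) * (∑ j, Complex.normSq (M j k m)) :=
  cs_bound (fun j => M j i l) (fun j => M j k m)

lemma endpoint0_real (P Q R S a c x y m : ℝ)
    (hP : 0 ≤ P) (hQ : 0 ≤ Q) (hR : 0 ≤ R) (hS : 0 ≤ S) (ha : 0 ≤ a) (hc : 0 ≤ c)
    (hx0 : 0 ≤ x) (hy0 : 0 ≤ y) (hm0 : 0 ≤ m)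
    (hm2 : m^2 ≤ a*c) (hx2 : x^2 ≤ P*S) (hy2 : y^2 ≤ Q*R) :
    (m*(x+y))^2 ≤ (a*P + c*Q) * (a*R + c*S) := by
  obtain ⟨u, hu0, hu2⟩ : ∃ u, 0 ≤ u ∧ u^2 = P*R :=
    ⟨Real.sqrt (P*R), Real.sqrt_nonneg _, Real.sq_sqrt (mul_nonneg hP hR)⟩
  obtain ⟨v, hv0, hv2⟩ : ∃ v, 0 ≤ v ∧ v^2 = Q*S :=
    ⟨Real.sqrt (Q*S), Real.sqrt_nonneg _, Real.sq_sqrt (mul_nonneg hQ hS)⟩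
  have hxy : x*y ≤ u*v := by
    nlinarith [mul_nonneg hx0 hy0, mul_nonneg hu0 hv0, hx2, hy2, hu2, hv2]
  have key2 : 2*(a*c)*(u*v) ≤ a^2*(P*R) + c^2*(Q*S) := by
    nlinarith [sq_nonneg (a*u - c*v), hu2, hv2, sq_nonneg a, sq_nonneg c]
  have e2 : (m*(x+y))^2 ≤ (a*c)*(x+y)^2 := by
    nlinarith [sq_nonneg (x+y), hm2]
  have e3 : (x+y)^2 ≤ P*S + Q*R + 2*(u*v) := by nlinarith [hx2, hy2, hxy]
  have e5 : (a*c)*(x+y)^2 ≤ (a*c)*(P*S + Q*R + 2*(u*v)) :=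
    mul_le_mul_of_nonneg_left e3 (mul_nonneg ha hc)
  nlinarith [key2, e2, e5]

lemma endpoint0 (P Q R S a c : ℝ) (cA cB b' : ℂ)
    (hP : 0 ≤ P) (hQ : 0 ≤ Q) (hR : 0 ≤ R) (hS : 0 ≤ S) (ha : 0 ≤ a) (hc : 0 ≤ c)
    (hb : Complex.normSq b' ≤ a * c)
    (hA : Complex.normSq cA ≤ P * S) (hB : Complex.normSq cB ≤ Q * R) :
    Complex.normSq (b' * cA + (starRingEnd ℂ) b' * cB) ≤ (a*P + c*Q) * (a*R + c*S) := by
  have habs : ‖b' * cA + (starRingEnd ℂ) b' * cB‖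
      ≤ ‖b'‖ * (‖cA‖ + ‖cB‖) := by
    refine le_trans (norm_add_le _ _) ?_
    simp only [norm_mul, Complex.norm_conj]
    ring_nf
    exact le_refl _
  have e1 : Complex.normSq (b' * cA + (starRingEnd ℂ) b' * cB)
      ≤ (‖b'‖ * (‖cA‖ + ‖cB‖))^2 := by
    rw [← Complex.sq_norm]
    have h0 : 0 ≤ ‖b' * cA + (starRingEnd ℂ) b' * cB‖ := norm_nonneg _
    nlinarith [habs]
  refine le_trans e1 ?_
  refine endpoint0_real P Q R S a c (‖cA‖) (‖cB‖) (‖b'‖)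
    hP hQ hR hS ha hc (norm_nonneg _) (norm_nonneg _) (norm_nonneg _)
    ?_ ?_ ?_ <;> rw [Complex.sq_norm] <;> assumption

lemma key (P Q R S a c t : ℝ) (cA cB cC b : ℂ)
    (hP : 0 ≤ P) (hQ : 0 ≤ Q) (hR : 0 ≤ R) (hS : 0 ≤ S) (ha : 0 ≤ a) (hc : 0 ≤ c)
    (ht : 0 ≤ t)
    (hbt : Complex.normSq b ≤ (t*a) * (t*c))
    (hb : Complex.normSq b ≤ a*c)
    (hA : Complex.normSq cA ≤ P * S) (hB : Complex.normSq cB ≤ Q * R)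
    (hdet' : ∀ b' : ℂ, Complex.normSq b' ≤ a*c →
      Complex.normSq (b' * cA + (starRingEnd ℂ) b' * cB) ≤
        (a*P + c*Q + 2*(b'*cC).re) * (a*R + c*S - 2*(b'*cC).re))
    (h0σ : 0 ≤ a*P + c*Q + 2*(b*cC).re) (h1σ : 0 ≤ a*R + c*S - 2*(b*cC).re) :
    Complex.normSq (b * cA + (starRingEnd ℂ) b * cB) ≤
      (t * (a*P + c*Q + 2*(b*cC).re)) * (t * (a*R + c*S - 2*(b*cC).re)) := by
  rcases le_or_gt t 1 with ht1 | ht1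
  · rcases eq_or_lt_of_le ht with ht0 | ht0
    · subst ht0
      have hb0 : Complex.normSq b ≤ 0 := by simpa using hbt
      have hbz : b = 0 := Complex.normSq_eq_zero.mp (le_antisymm hb0 (Complex.normSq_nonneg b))
      subst hbz
      simp
    · set b' : ℂ := b / (t : ℂ) with hb'def
      have htne : (t : ℂ) ≠ 0 := by
        simp only [ne_eq, Complex.ofReal_eq_zero]; exact ne_of_gt ht0
      have hbb : b = (t : ℂ) * b' := by rw [hb'def, mul_div_cancel₀ _ htne]
      have hnb' : Complex.normSq b' = Complex.normSq b / (t*t) := by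
        rw [hb'def, Complex.normSq_div, Complex.normSq_ofReal]
      have hb'ac : Complex.normSq b' ≤ a * c := by
        rw [hnb', div_le_iff₀ (by positivity)]
        nlinarith [hbt]
      have H := hdet' b' hb'ac
      have L0 := endpoint0 P Q R S a c cA cB b' hP hQ hR hS ha hc hb'ac hA hB
      set s' := 2 * (b' * cC).re with hs'
      set w' := b' * cA + (starRingEnd ℂ) b' * cB with hw'
      have hwsc : b * cA + (starRingEnd ℂ) b * cB = (t : ℂ) * w' := by
        rw [hbb, hw']; simp only [_root_.map_mul, Complex.conj_ofReal]; ring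
      have hssc : 2 * (b * cC).re = t * s' := by
        rw [hbb, hs']
        have h5 : (t:ℂ) * b' * cC = (t:ℂ) * (b' * cC) := by ring
        rw [h5, Complex.re_ofReal_mul]
        ring
      rw [hwsc, hssc]
      rw [Complex.normSq_mul, Complex.normSq_ofReal]
      set d0 := a*P + c*Q with hd0
      set d1 := a*R + c*S with hd1
      have goal2 : Complex.normSq w' ≤ (d0 + t*s') * (d1 - t*s') := by
        have h1 : (1-t) * Complex.normSq w' ≤ (1-t) * (d0*d1) :=
          mul_le_mul_of_nonneg_left L0 (by linarith)
        have h2 : t * Complex.normSq w' ≤ t * ((d0+s')*(d1-s')) :=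
          mul_le_mul_of_nonneg_left H ht
        have h3 : 0 ≤ (t*(1-t))*s'^2 := mul_nonneg (mul_nonneg ht (by linarith)) (sq_nonneg _)
        nlinarith [h1, h2, h3]
      calc (t*t) * Complex.normSq w' ≤ (t*t) * ((d0 + t*s') * (d1 - t*s')) :=
            mul_le_mul_of_nonneg_left goal2 (mul_nonneg ht ht)
        _ = (t * (d0 + t*s')) * (t * (d1 - t*s')) := by ring
  · have H := hdet' b hb
    have ht2 : 1 ≤ t*t := by nlinarith
    have h6 := le_mul_of_one_le_left (mul_nonneg h0σ h1σ) ht2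
    nlinarith [H, h6]

end Stmt7Aux

open Complex in
/-- The Δ-robustness of coherence is monotone under qubit MIO channels. -/
theorem stmt_7 (n : ℕ) (M : Fin n → Matrix (Fin 2) (Fin 2) ℂ)
    (hK : ∑ j, (M j)ᴴ * M j = 1)
    (hMIO : ∀ x : Fin 2, (∑ j, M j * Matrix.single x x (1 : ℂ) * (M j)ᴴ).IsDiag)
    (ρ : Matrix (Fin 2) (Fin 2) ℂ) (hρ : ρ.PosSemidef) (htr : ρ.trace = 1) :
    CDR (∑ j, M j * ρ * (M j)ᴴ) ≤ CDR ρ := by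
  classical
  obtain ⟨a, ha'⟩ : ∃ x, x = (ρ 0 0).re := ⟨_, rfl⟩
  obtain ⟨c, hc'⟩ : ∃ x, x = (ρ 1 1).re := ⟨_, rfl⟩
  obtain ⟨b, hb'⟩ : ∃ x, x = ρ 0 1 := ⟨_, rfl⟩
  have hρ00 : ρ 0 0 = (a : ℂ) := by rw [ha']; exact (hρ.1.coe_re_apply_self 0).symm
  have hρ11 : ρ 1 1 = (c : ℂ) := by rw [hc']; exact (hρ.1.coe_re_apply_self 1).symm
  have hρ01 : ρ 0 1 = b := hb'.symm
  have hρ10 : ρ 1 0 = starRingEnd ℂ b := by rw [hb']; exact (hρ.1.apply 1 0).symm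
  have ha0 : 0 ≤ a := by rw [ha']; exact Stmt7Aux.diag_re_nonneg ρ hρ 0
  have hc0 : 0 ≤ c := by rw [hc']; exact Stmt7Aux.diag_re_nonneg ρ hρ 1
  have hbsq : Complex.normSq b ≤ a * c := by
    rw [hb', ha', hc']; exact Stmt7Aux.offdiag_sq ρ hρ
  -- scalar channel data
  obtain ⟨P, hP'⟩ : ∃ x, x = ∑ j, Complex.normSq (M j 0 0) := ⟨_, rfl⟩
  obtain ⟨Q, hQ'⟩ : ∃ x, x = ∑ j, Complex.normSq (M j 0 1) := ⟨_, rfl⟩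
  obtain ⟨R, hR'⟩ : ∃ x, x = ∑ j, Complex.normSq (M j 1 0) := ⟨_, rfl⟩
  obtain ⟨S, hS'⟩ : ∃ x, x = ∑ j, Complex.normSq (M j 1 1) := ⟨_, rfl⟩
  obtain ⟨cA, hcA'⟩ : ∃ x, x = Stmt7Aux.T M 0 1 0 1 := ⟨_, rfl⟩
  obtain ⟨cB, hcB'⟩ : ∃ x, x = Stmt7Aux.T M 0 1 1 0 := ⟨_, rfl⟩
  obtain ⟨cC, hcC'⟩ : ∃ x, x = Stmt7Aux.T M 0 0 0 1 := ⟨_, rfl⟩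
  have hP0 : 0 ≤ P := by rw [hP']; exact Finset.sum_nonneg fun j _ => Complex.normSq_nonneg _
  have hQ0 : 0 ≤ Q := by rw [hQ']; exact Finset.sum_nonneg fun j _ => Complex.normSq_nonneg _
  have hR0 : 0 ≤ R := by rw [hR']; exact Finset.sum_nonneg fun j _ => Complex.normSq_nonneg _
  have hS0 : 0 ≤ S := by rw [hS']; exact Finset.sum_nonneg fun j _ => Complex.normSq_nonneg _
  have hAcs : Complex.normSq cA ≤ P * S := by
    rw [hcA', hP', hS']; exact Stmt7Aux.T_cs M 0 1 0 1
  have hBcs : Complex.normSq cB ≤ Q * R := by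
    rw [hcB', hQ', hR']; exact Stmt7Aux.T_cs M 0 1 1 0
  -- MIO scalar conditions
  have hmio0 : Stmt7Aux.T M 0 1 0 0 = 0 := by
    have h : (∑ j, M j * Matrix.single (0 : Fin 2) 0 1 * (M j)ᴴ
        : Matrix (Fin 2) (Fin 2) ℂ) 0 1 = 0 :=
      hMIO 0 (show (0 : Fin 2) ≠ 1 by decide)
    rw [Stmt7Aux.chan_entry] at h
    simpa using h
  have hmio1 : Stmt7Aux.T M 0 1 1 1 = 0 := by
    have h : (∑ j, M j * Matrix.single (1 : Fin 2) 1 1 * (M j)ᴴ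
        : Matrix (Fin 2) (Fin 2) ℂ) 0 1 = 0 :=
      hMIO 1 (show (0 : Fin 2) ≠ 1 by decide)
    rw [Stmt7Aux.chan_entry] at h
    simpa using h
  -- trace preservation scalar condition
  have htp : Stmt7Aux.T M 1 1 0 1 = -cC := by
    have h01 := congrFun (congrFun hK 0) 1
    rw [Matrix.sum_apply] at h01
    simp only [Matrix.mul_apply, Fin.sum_univ_two, Matrix.conjTranspose_apply,
      Matrix.one_apply, if_neg (show ¬((0 : Fin 2) = 1) by decide)] at h01
    have h02 := congrArg (starRingEnd ℂ) h01
    simp only [map_sum, map_add, _root_.map_mul, Complex.star_def, Complex.conj_conj,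
      map_zero] at h02
    rw [Finset.sum_add_distrib] at h02
    rw [hcC']
    simp only [Stmt7Aux.T]
    linear_combination h02
  -- channel entry values
  have hvals : ∀ (a' c' : ℝ) (b'' : ℂ) (X : Matrix (Fin 2) (Fin 2) ℂ),
      X 0 0 = (a' : ℂ) → X 0 1 = b'' → X 1 0 = starRingEnd ℂ b'' → X 1 1 = (c' : ℂ) →
      ((∑ j, M j * X * (M j)ᴴ) 0 0 = ((a'*P + c'*Q + 2*(b''*cC).re : ℝ) : ℂ))
      ∧ ((∑ j, M j * X * (M j)ᴴ) 1 1 = ((a'*R + c'*S - 2*(b''*cC).re : ℝ) : ℂ))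
      ∧ ((∑ j, M j * X * (M j)ᴴ) 0 1 = b'' * cA + starRingEnd ℂ b'' * cB) := by
    intro a' c' b'' X h00 h01 h10 h11
    have hT00P : Stmt7Aux.T M 0 0 0 0 = (P : ℂ) := by rw [hP']; exact Stmt7Aux.T_diag_cast M 0 0
    have hT00Q : Stmt7Aux.T M 0 0 1 1 = (Q : ℂ) := by rw [hQ']; exact Stmt7Aux.T_diag_cast M 0 1
    have hT11R : Stmt7Aux.T M 1 1 0 0 = (R : ℂ) := by rw [hR']; exact Stmt7Aux.T_diag_cast M 1 0
    have hT11S : Stmt7Aux.T M 1 1 1 1 = (S : ℂ) := by rw [hS']; exact Stmt7Aux.T_diag_cast M 1 1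
    have hT0010 : Stmt7Aux.T M 0 0 1 0 = starRingEnd ℂ cC := by
      rw [hcC']; exact Stmt7Aux.T_swap M 0 0 1 0
    have hT1110 : Stmt7Aux.T M 1 1 1 0 = starRingEnd ℂ (-cC) := by
      rw [← htp]; exact Stmt7Aux.T_swap M 1 1 1 0
    have hac : b''*cC + starRingEnd ℂ (b''*cC) = 2*(((b''*cC).re : ℝ) : ℂ) := by
      rw [Complex.add_conj]; push_cast; ring
    refine ⟨?_, ?_, ?_⟩
    · rw [Stmt7Aux.chan_entry, h00, h01, h10, h11, hT00P, hT00Q, hT0010, ← hcC']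
      rw [show starRingEnd ℂ b'' * starRingEnd ℂ cC = starRingEnd ℂ (b'' * cC) from
        (_root_.map_mul _ _ _).symm]
      push_cast
      linear_combination hac
    · rw [Stmt7Aux.chan_entry, h00, h01, h10, h11, hT11R, hT11S, htp, hT1110]
      rw [show starRingEnd ℂ b'' * starRingEnd ℂ (-cC) = starRingEnd ℂ (b'' * (-cC)) from
        (_root_.map_mul _ _ _).symm]
      have hac' : b''*(-cC) + starRingEnd ℂ (b''*(-cC)) = -(2*(((b''*cC).re : ℝ) : ℂ)) := by
        rw [Complex.add_conj]
        push_cast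
        simp [Complex.neg_re]
        ring
      push_cast
      linear_combination hac'
    · rw [Stmt7Aux.chan_entry, h00, h01, h10, h11, hmio0, hmio1, ← hcA', ← hcB']
      ring
  have hdet' : ∀ b'' : ℂ, Complex.normSq b'' ≤ a*c →
      Complex.normSq (b'' * cA + (starRingEnd ℂ) b'' * cB) ≤
        (a*P + c*Q + 2*(b''*cC).re) * (a*R + c*S - 2*(b''*cC).re) := by
    intro b'' hb2
    have hX00 : (!![(a:ℂ), b''; starRingEnd ℂ b'', (c:ℂ)] : Matrix (Fin 2) (Fin 2) ℂ) 0 0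
        = (a:ℂ) := by norm_num
    have hX01 : (!![(a:ℂ), b''; starRingEnd ℂ b'', (c:ℂ)] : Matrix (Fin 2) (Fin 2) ℂ) 0 1
        = b'' := by norm_num
    have hX10 : (!![(a:ℂ), b''; starRingEnd ℂ b'', (c:ℂ)] : Matrix (Fin 2) (Fin 2) ℂ) 1 0
        = starRingEnd ℂ b'' := by norm_num
    have hX11 : (!![(a:ℂ), b''; starRingEnd ℂ b'', (c:ℂ)] : Matrix (Fin 2) (Fin 2) ℂ) 1 1
        = (c:ℂ) := by norm_num
    have hherm : (!![(a:ℂ), b''; starRingEnd ℂ b'', (c:ℂ)] : Matrix (Fin 2) (Fin 2) ℂ).IsHermitian := by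
      show _ᴴ = _
      ext i j
      fin_cases i <;> fin_cases j <;>
        simp [Matrix.conjTranspose_apply, Complex.conj_ofReal]
    have hXpsd : (!![(a:ℂ), b''; starRingEnd ℂ b'', (c:ℂ)] : Matrix (Fin 2) (Fin 2) ℂ).PosSemidef := by
      apply Stmt7Aux.psd2_of _ hherm
      · rw [hX00]; simpa using ha0
      · rw [hX11]; simpa using hc0
      · rw [hX00, hX01, hX11]; simpa using hb2
    have hchan := Stmt7Aux.chan_psd M hXpsd
    have hoff := Stmt7Aux.offdiag_sq _ hchan
    obtain ⟨v00, v11, v01⟩ := hvals a c b'' _ hX00 hX01 hX10 hX11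
    rw [v00, v11, v01] at hoff
    simpa using hoff
  have hσpsd : (∑ j, M j * ρ * (M j)ᴴ).PosSemidef := Stmt7Aux.chan_psd M hρ
  obtain ⟨v00, v11, v01⟩ := hvals a c b ρ hρ00 hρ01 hρ10 hρ11
  have hσ00re : ((∑ j, M j * ρ * (M j)ᴴ) 0 0).re = a*P + c*Q + 2*(b*cC).re := by
    rw [v00]; simp
  have hσ11re : ((∑ j, M j * ρ * (M j)ᴴ) 1 1).re = a*R + c*S - 2*(b*cC).re := by
    rw [v11]; simp
  have h0σ : 0 ≤ a*P + c*Q + 2*(b*cC).re := by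
    rw [← hσ00re]; exact Stmt7Aux.diag_re_nonneg _ hσpsd 0
  have h1σ : 0 ≤ a*R + c*S - 2*(b*cC).re := by
    rw [← hσ11re]; exact Stmt7Aux.diag_re_nonneg _ hσpsd 1
  have hsub : {t : ℝ | 0 ≤ t ∧ (((1 + t : ℝ) : ℂ) • deph ρ - ρ).PosSemidef} ⊆
      {t : ℝ | 0 ≤ t ∧ (((1 + t : ℝ) : ℂ) • deph (∑ j, M j * ρ * (M j)ᴴ)
        - ∑ j, M j * ρ * (M j)ᴴ).PosSemidef} := by
    rintro t ⟨ht0, hpsd⟩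
    refine ⟨ht0, ?_⟩
    have hY00 : (((1 + t : ℝ) : ℂ) • deph ρ - ρ) 0 0 = ((t*a : ℝ) : ℂ) := by
      simp [deph, Matrix.sub_apply, Matrix.smul_apply, Matrix.diagonal_apply_eq, hρ00]
      push_cast; ring
    have hY11 : (((1 + t : ℝ) : ℂ) • deph ρ - ρ) 1 1 = ((t*c : ℝ) : ℂ) := by
      simp [deph, Matrix.sub_apply, Matrix.smul_apply, Matrix.diagonal_apply_eq, hρ11]
      push_cast; ring
    have hY01 : (((1 + t : ℝ) : ℂ) • deph ρ - ρ) 0 1 = -b := by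
      simp [deph, Matrix.sub_apply, Matrix.smul_apply,
        Matrix.diagonal_apply_ne _ (show (0:Fin 2) ≠ 1 by decide), hρ01]
    have hbt : Complex.normSq b ≤ (t*a) * (t*c) := by
      have h := Stmt7Aux.offdiag_sq _ hpsd
      rw [hY00, hY11, hY01] at h
      simpa using h
    set σ := ∑ j, M j * ρ * (M j)ᴴ with hσdef
    have hG00 : (((1 + t : ℝ) : ℂ) • deph σ - σ) 0 0
        = ((t*(a*P + c*Q + 2*(b*cC).re) : ℝ) : ℂ) := by
      simp [deph, Matrix.sub_apply, Matrix.smul_apply, Matrix.diagonal_apply_eq, v00]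
      push_cast; ring
    have hG11 : (((1 + t : ℝ) : ℂ) • deph σ - σ) 1 1
        = ((t*(a*R + c*S - 2*(b*cC).re) : ℝ) : ℂ) := by
      simp [deph, Matrix.sub_apply, Matrix.smul_apply, Matrix.diagonal_apply_eq, v11]
      push_cast; ring
    have hG01 : (((1 + t : ℝ) : ℂ) • deph σ - σ) 0 1
        = -(b * cA + starRingEnd ℂ b * cB) := by
      simp [deph, Matrix.sub_apply, Matrix.smul_apply,
        Matrix.diagonal_apply_ne _ (show (0:Fin 2) ≠ 1 by decide), v01]
    apply Stmt7Aux.psd2_of _ (Stmt7Aux.herm_comb hσpsd.1 (1+t))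
    · rw [hG00]; simpa using mul_nonneg ht0 h0σ
    · rw [hG11]; simpa using mul_nonneg ht0 h1σ
    · rw [hG00, hG11, hG01]
      simp only [Complex.normSq_neg, Complex.ofReal_re]
      exact Stmt7Aux.key P Q R S a c t cA cB cC b hP0 hQ0 hR0 hS0 ha0 hc0 ht0 hbt hbsq
        hAcs hBcs hdet' h0σ h1σ
  have hone : (((1 + (1:ℝ) : ℝ) : ℂ) • deph ρ - ρ).PosSemidef := by
    have hZ : ((1 + (1:ℝ) : ℝ) : ℂ) • deph ρ - ρ
        = Matrix.diagonal ![(1:ℂ), -1] * ρ * (Matrix.diagonal ![(1:ℂ), -1])ᴴ := by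
      ext i j
      fin_cases i <;> fin_cases j <;>
        simp [deph, Matrix.mul_apply, Fin.sum_univ_two, Matrix.conjTranspose_apply,
          Matrix.diagonal_apply, Matrix.sub_apply, Matrix.smul_apply] <;> ring
    rw [hZ]
    exact hρ.mul_mul_conjTranspose_same _
  unfold CDR
  exact csInf_le_csInf ⟨0, fun x hx => hx.1⟩ ⟨1, by norm_num, hone⟩ hsub
end

section
/- Let d ≥ 1, let α ∈ (1, 2], and let a : Fin d → ℝ with a_x > 0 for all x. Then the infimum of Σ_x a_x · q_x^{1−α} over all q : Fin d → ℝ with q_x > 0 for all x and Σ_x q_x = 1 equals (Σ_x a_x^{1/α})^α, and it is attained at q_x = a_x^{1/α} / (Σ_{x'} a_{x'}^{1/α}). -/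
open Finset

/-- The core optimization in computing the relative Rényi entropy of coherence:
for `α ∈ (1,2]` and positive weights `a_x`, the minimum of
`Σ_x a_x q_x^{1−α}` over probability vectors `q` with positive entries is
`(Σ_x a_x^{1/α})^α`, attained at `q_x = a_x^{1/α} / Σ_{x'} a_{x'}^{1/α}`. -/
theorem stmt_12 (d : ℕ) (hd : 1 ≤ d) (α : ℝ) (hα1 : 1 < α) (hα2 : α ≤ 2)
    (a : Fin d → ℝ) (ha : ∀ x, 0 < a x) :
    IsLeast {v : ℝ | ∃ q : Fin d → ℝ, (∀ x, 0 < q x) ∧ (∑ x, q x = 1) ∧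
        v = ∑ x, a x * (q x) ^ (1 - α)}
      ((∑ x, (a x) ^ (1 / α)) ^ α) ∧
    (∑ x, a x * ((a x) ^ (1 / α) / ∑ x', (a x') ^ (1 / α)) ^ (1 - α))
      = (∑ x, (a x) ^ (1 / α)) ^ α := by
  have hα0 : (0:ℝ) < α := lt_trans one_pos hα1
  have hα0' : α ≠ 0 := hα0.ne'
  have hαm1 : α - 1 ≠ 0 := sub_ne_zero.mpr hα1.ne'
  have hne : (Finset.univ : Finset (Fin d)).Nonempty := ⟨⟨0, hd⟩, mem_univ _⟩
  set S := ∑ x, (a x) ^ (1 / α) with hS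
  have hSpos : 0 < S :=
    Finset.sum_pos (fun x _ => Real.rpow_pos_of_pos (ha x) _) hne
  -- value at the candidate minimizer
  have key : (∑ x, a x * ((a x) ^ (1 / α) / S) ^ (1 - α)) = S ^ α := by
    have hterm : ∀ x : Fin d, a x * ((a x) ^ (1 / α) / S) ^ (1 - α)
        = (a x) ^ (1 / α) * S ^ (α - 1) := by
      intro x
      have hax : (0:ℝ) < a x := ha x
      have e1 : ((a x) ^ (1 / α) / S) ^ (1 - α)
          = (a x) ^ ((1 / α) * (1 - α)) * S ^ (α - 1) := by
        rw [Real.div_rpow (Real.rpow_nonneg hax.le _) hSpos.le,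
          ← Real.rpow_mul hax.le, div_eq_mul_inv, ← Real.rpow_neg hSpos.le, neg_sub]
      rw [e1, ← mul_assoc]
      congr 1
      calc a x * (a x) ^ ((1 / α) * (1 - α))
          = (a x) ^ (1:ℝ) * (a x) ^ ((1 / α) * (1 - α)) := by rw [Real.rpow_one]
        _ = (a x) ^ (1 + (1 / α) * (1 - α)) := (Real.rpow_add hax _ _).symm
        _ = (a x) ^ (1 / α) := by congr 1; field_simp; ring
    rw [Finset.sum_congr rfl fun x _ => hterm x, ← Finset.sum_mul, ← hS]
    calc S * S ^ (α - 1) = S ^ (1:ℝ) * S ^ (α - 1) := by rw [Real.rpow_one]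
      _ = S ^ (1 + (α - 1)) := (Real.rpow_add hSpos _ _).symm
      _ = S ^ α := by ring_nf
  refine ⟨⟨⟨fun x => (a x) ^ (1 / α) / S,
      fun x => div_pos (Real.rpow_pos_of_pos (ha x) _) hSpos,
      by rw [← Finset.sum_div, ← hS, div_self hSpos.ne'], key.symm⟩, ?_⟩, key⟩
  -- lower bound via Hölder
  rintro v ⟨q, hq, hqsum, rfl⟩
  set T := ∑ x, a x * (q x) ^ (1 - α) with hT
  have hTpos : 0 < T :=
    Finset.sum_pos (fun x _ => mul_pos (ha x) (Real.rpow_pos_of_pos (hq x) _)) hne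
  have hpq : Real.HolderConjugate α (α / (α - 1)) := by
    exact (Real.holderConjugate_iff_eq_conjExponent hα1).mpr rfl
  set F : Fin d → ℝ := fun x => (a x * (q x) ^ (1 - α)) ^ (1 / α) with hF
  set G : Fin d → ℝ := fun x => (q x) ^ ((α - 1) / α) with hG
  have H := Real.inner_le_Lp_mul_Lq_of_nonneg (s := (univ : Finset (Fin d))) hpq
    (f := F) (g := G)
    (fun x _ => Real.rpow_nonneg (mul_nonneg (ha x).le (Real.rpow_nonneg (hq x).le _)) _)
    (fun x _ => Real.rpow_nonneg (hq x).le _)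
  have eFG : ∀ x : Fin d, F x * G x = (a x) ^ (1 / α) := by
    intro x
    have hqx := hq x
    rw [hF, hG]
    simp only
    rw [Real.mul_rpow (ha x).le (Real.rpow_nonneg hqx.le _),
      ← Real.rpow_mul hqx.le, mul_assoc, ← Real.rpow_add hqx]
    have : (1 - α) * (1 / α) + (α - 1) / α = 0 := by field_simp; ring
    rw [this, Real.rpow_zero, mul_one]
  have eF : ∀ x : Fin d, F x ^ α = a x * (q x) ^ (1 - α) := by
    intro x
    rw [hF]
    simp only
    rw [← Real.rpow_mul (mul_nonneg (ha x).le (Real.rpow_nonneg (hq x).le _)),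
      one_div_mul_cancel hα0', Real.rpow_one]
  have eG : ∀ x : Fin d, G x ^ (α / (α - 1)) = q x := by
    intro x
    rw [hG]
    simp only
    rw [← Real.rpow_mul (hq x).le]
    have : (α - 1) / α * (α / (α - 1)) = 1 := by field_simp
    rw [this, Real.rpow_one]
  rw [Finset.sum_congr rfl fun x _ => eFG x,
    Finset.sum_congr rfl fun x _ => eF x,
    Finset.sum_congr rfl fun x _ => eG x, hqsum, Real.one_rpow, mul_one, ← hS, ← hT] at H
  calc S ^ α ≤ (T ^ (1 / α)) ^ α := Real.rpow_le_rpow hSpos.le H hα0.le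
    _ = T := by
      rw [← Real.rpow_mul hTpos.le, one_div_mul_cancel hα0', Real.rpow_one]
end

section
/- Let d ≥ 1 and t ∈ ℝ, and define the linear map Φ_t : M_d(ℂ) → M_d(ℂ) by Φ_t(X) = (1+t)Δ(X) − X. The following are equivalent: (i) Φ_t is positive, i.e., Φ_t(X) is positive semidefinite whenever X is positive semidefinite; (ii) Φ_t is completely positive, i.e., its Choi matrix Σ_{j,k ∈ Fin d} E_{jk} ⊗ Φ_t(E_{jk}) (a d²×d² matrix built from the standard matrix units E_{jk} via the Kronecker product, equal to (1+t)·Σ_j E_{jj} ⊗ E_{jj} − Σ_{j,k} E_{jk} ⊗ E_{jk}) is positive semidefinite; (iii) t ≥ d − 1. -/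
open Matrix ComplexOrder

/-- The map `Φ_t(X) = (1+t)Δ(X) − X`. -/
noncomputable def Phi (d : ℕ) (t : ℝ) (X : Matrix (Fin d) (Fin d) ℂ) :
    Matrix (Fin d) (Fin d) ℂ :=
  ((1 + t : ℝ) : ℂ) • deph X - X

/-- Cauchy–Schwarz: `|∑ v|² ≤ d ∑ |v|²`. -/
lemma cs_aux (d : ℕ) (v : Fin d → ℂ) :
    Complex.normSq (∑ x, v x) ≤ d * ∑ x, Complex.normSq (v x) := by
  have h1 : ‖∑ x, v x‖ ≤ ∑ x, ‖v x‖ := norm_sum_le _ _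
  have h2 : (∑ x, ‖v x‖) ^ 2 ≤ (d : ℝ) * ∑ x, ‖v x‖ ^ 2 := by
    simpa using sq_sum_le_card_mul_sum_sq (s := (Finset.univ : Finset (Fin d)))
      (f := fun x => ‖v x‖)
  have h3 : ‖∑ x, v x‖ ^ 2 ≤ (∑ x, ‖v x‖) ^ 2 := pow_le_pow_left₀ (norm_nonneg _) h1 2
  calc Complex.normSq (∑ x, v x) = ‖∑ x, v x‖ ^ 2 := by
        simp [Complex.normSq_eq_norm_sq]
    _ ≤ (d : ℝ) * ∑ x, ‖v x‖ ^ 2 := le_trans h3 h2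
    _ = d * ∑ x, Complex.normSq (v x) := by
        simp [Complex.normSq_eq_norm_sq]

lemma phi_herm {d : ℕ} {t : ℝ} {X : Matrix (Fin d) (Fin d) ℂ} (hX : X.IsHermitian) :
    (Phi d t X).IsHermitian := by
  have h1 : (deph X).IsHermitian := by
    ext i j
    by_cases hij : i = j
    · subst hij
      simpa [deph, conjTranspose_apply] using hX.apply i i
    · simp [deph, conjTranspose_apply, diagonal_apply, hij, Ne.symm hij]
  have h2 : (((1 + t : ℝ) : ℂ) • deph X).IsHermitian := by
    ext i j
    simp [conjTranspose_apply, ← h1.apply i j]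
  exact h2.sub hX

lemma quad_eq {n : Type*} [Fintype n] (M : Matrix n n ℂ) (w : n → ℂ) :
    star w ⬝ᵥ (M *ᵥ w) = ∑ x, ∑ y, (starRingEnd ℂ) (w x) * M x y * w y := by
  simp [dotProduct, mulVec, Finset.mul_sum, mul_assoc]

lemma phi_pos {d : ℕ} {t : ℝ} (h : (d : ℝ) - 1 ≤ t) (X : Matrix (Fin d) (Fin d) ℂ)
    (hX : X.PosSemidef) : (Phi d t X).PosSemidef := by
  obtain ⟨B, rfl⟩ : ∃ B : Matrix (Fin d) (Fin d) ℂ, X = Bᴴ * B := by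
    open scoped MatrixOrder in exact CStarAlgebra.nonneg_iff_eq_star_mul_self.mp hX.nonneg
  refine .of_dotProduct_mulVec_nonneg (phi_herm (posSemidef_conjTranspose_mul_self B).1) fun w => ?_
  have h2 : star w ⬝ᵥ ((Bᴴ * B) *ᵥ w) = ((∑ i, Complex.normSq ((B *ᵥ w) i) : ℝ) : ℂ) := by
    rw [← mulVec_mulVec, dotProduct_mulVec, ← star_mulVec]
    push_cast
    simp [dotProduct, Complex.normSq_eq_conj_mul_self]
  have h1 : star w ⬝ᵥ ((((1 + t : ℝ) : ℂ) • deph (Bᴴ * B)) *ᵥ w)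
      = (((1 + t) * ∑ x, Complex.normSq (w x) * ∑ i, Complex.normSq (B i x) : ℝ) : ℂ) := by
    push_cast
    simp only [dotProduct, mulVec, deph, Matrix.smul_apply, diagonal_apply, Pi.star_apply,
      mul_apply, conjTranspose_apply, smul_eq_mul, mul_ite, ite_mul, mul_zero, zero_mul,
      Finset.mul_sum, Finset.sum_ite_eq, Finset.mem_univ, if_true]
    apply Finset.sum_congr rfl
    intro x _
    rw [Finset.sum_mul, Finset.mul_sum]
    apply Finset.sum_congr rfl
    intro i _
    simp only [Complex.star_def]
    rw [show (starRingEnd ℂ) (w x) * ((1 + (t:ℂ)) * ((starRingEnd ℂ) (B i x) * B i x) * w x)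
        = (1 + (t:ℂ)) * (((starRingEnd ℂ) (w x) * w x) * ((starRingEnd ℂ) (B i x) * B i x)) by ring,
      ← Complex.normSq_eq_conj_mul_self (z := w x), ← Complex.normSq_eq_conj_mul_self (z := B i x)]
  rw [Phi, sub_mulVec, dotProduct_sub, h1, h2, ← Complex.ofReal_sub, Complex.zero_le_real]
  have key : ∀ i, Complex.normSq ((B *ᵥ w) i)
      ≤ d * ∑ x, Complex.normSq (B i x) * Complex.normSq (w x) := by
    intro i
    simpa [mulVec, dotProduct, Complex.normSq_mul] using cs_aux d (fun x => B i x * w x)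
  have swap : ∑ i, ∑ x, Complex.normSq (B i x) * Complex.normSq (w x)
      = ∑ x, Complex.normSq (w x) * ∑ i, Complex.normSq (B i x) := by
    rw [Finset.sum_comm]
    simp [Finset.mul_sum, mul_comm]
  have hd : (d : ℝ) ≤ 1 + t := by linarith
  have hsum : ∑ i, Complex.normSq ((B *ᵥ w) i)
      ≤ (1 + t) * ∑ x, Complex.normSq (w x) * ∑ i, Complex.normSq (B i x) := by
    calc ∑ i, Complex.normSq ((B *ᵥ w) i)
        ≤ ∑ i, (d : ℝ) * ∑ x, Complex.normSq (B i x) * Complex.normSq (w x) :=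
          Finset.sum_le_sum fun i _ => key i
      _ = (d : ℝ) * ∑ x, Complex.normSq (w x) * ∑ i, Complex.normSq (B i x) := by
          rw [← Finset.mul_sum, swap]
      _ ≤ (1 + t) * ∑ x, Complex.normSq (w x) * ∑ i, Complex.normSq (B i x) := by
          apply mul_le_mul_of_nonneg_right hd
          exact Finset.sum_nonneg fun x _ => mul_nonneg (Complex.normSq_nonneg _)
            (Finset.sum_nonneg fun i _ => Complex.normSq_nonneg _)
  linarith

lemma choi_apply (d : ℕ) (t : ℝ) (a b c e : Fin d) :
    (∑ j : Fin d, ∑ k : Fin d,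
      Matrix.kroneckerMap (· * ·) (Matrix.single j k (1 : ℂ))
        (Phi d t (Matrix.single j k (1 : ℂ)))) (a, b) (c, e)
    = (if a = b then 1 else 0) * (if c = e then 1 else 0)
        * ((1 + (t : ℂ)) * (if a = c then 1 else 0) - 1) := by
  simp only [Matrix.sum_apply, Matrix.kroneckerMap_apply, Phi, deph, Matrix.sub_apply,
    Matrix.smul_apply, Matrix.diagonal_apply, Matrix.single, Matrix.of_apply,
    smul_eq_mul, mul_ite, ite_mul, mul_zero, zero_mul, mul_one, one_mul]
  simp only [ite_and, Finset.sum_ite_irrel, Finset.sum_ite_eq', Finset.mem_univ, if_true,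
    Finset.sum_const_zero]
  split_ifs <;> simp_all

lemma choi_form (d : ℕ) (t : ℝ) (w : Fin d × Fin d → ℂ) :
    star w ⬝ᵥ ((∑ j : Fin d, ∑ k : Fin d,
      Matrix.kroneckerMap (· * ·) (Matrix.single j k (1 : ℂ))
        (Phi d t (Matrix.single j k (1 : ℂ)))) *ᵥ w)
    = (((1 + t) * ∑ a, Complex.normSq (w (a, a)) - Complex.normSq (∑ a, w (a, a)) : ℝ) : ℂ) := by
  rw [quad_eq]
  simp only [Fintype.sum_prod_type, choi_apply, ite_mul, mul_ite, zero_mul, mul_zero,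
    one_mul, mul_one]
  simp only [Finset.sum_ite_eq, Finset.sum_ite_eq', Finset.mem_univ, if_true,
    Finset.sum_const_zero]
  simp only [Finset.sum_ite_irrel, Finset.sum_const_zero, Finset.sum_ite_eq,
    Finset.mem_univ, if_true]
  have key : ∀ x x2 : Fin d,
      (starRingEnd ℂ) (w (x, x)) * ((if x = x2 then 1 + (t : ℂ) else 0) - 1) * w (x2, x2)
      = (if x = x2 then (1 + (t : ℂ)) * ((starRingEnd ℂ) (w (x, x)) * w (x, x)) else 0)
        - (starRingEnd ℂ) (w (x, x)) * w (x2, x2) := by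
    intro x x2
    split_ifs with h
    · subst h; ring
    · ring
  simp only [key, Finset.sum_sub_distrib, Finset.sum_ite_eq, Finset.mem_univ, if_true]
  simp only [← Finset.mul_sum, ← Finset.sum_mul]
  rw [← map_sum]
  simp only [← Complex.normSq_eq_conj_mul_self]
  push_cast
  ring

lemma choi_herm (d : ℕ) (t : ℝ) :
    (∑ j : Fin d, ∑ k : Fin d,
      Matrix.kroneckerMap (· * ·) (Matrix.single j k (1 : ℂ))
        (Phi d t (Matrix.single j k (1 : ℂ)))).IsHermitian := by
  ext ⟨a, b⟩ ⟨c, e⟩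
  rw [conjTranspose_apply, choi_apply, choi_apply]
  simp only [show (c = a) ↔ (a = c) from eq_comm]
  split_ifs <;> simp [Complex.star_def, Complex.conj_ofReal]

/-- For `Φ_t(X) = (1+t)Δ(X) − X`, the following are equivalent: `Φ_t` is
positive; `Φ_t` is completely positive (its Choi matrix is PSD); `t ≥ d − 1`. -/
theorem stmt_13 (d : ℕ) (hd : 1 ≤ d) (t : ℝ) :
    List.TFAE [
      (∀ X : Matrix (Fin d) (Fin d) ℂ, X.PosSemidef → (Phi d t X).PosSemidef),
      (∑ j : Fin d, ∑ k : Fin d,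
        Matrix.kroneckerMap (· * ·) (Matrix.single j k (1 : ℂ))
          (Phi d t (Matrix.single j k (1 : ℂ)))).PosSemidef,
      ((d : ℝ) - 1 ≤ t)] := by
  have hd0 : (0 : ℝ) < d := by exact_mod_cast hd
  tfae_have 3 → 1 := fun h X hX => phi_pos h X hX
  tfae_have 1 → 3 := by
    intro h1
    have hJ : (Matrix.of fun _ _ : Fin d => (1 : ℂ)).PosSemidef := by
      refine .of_dotProduct_mulVec_nonneg ?_ fun w => ?_
      · ext i j; simp [conjTranspose_apply]
      · have hw : star w ⬝ᵥ ((Matrix.of fun _ _ : Fin d => (1 : ℂ)) *ᵥ w)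
            = ((Complex.normSq (∑ x, w x) : ℝ) : ℂ) := by
          rw [quad_eq]
          simp only [Matrix.of_apply, mul_one]
          rw [Complex.normSq_eq_conj_mul_self, map_sum, Finset.sum_mul]
          simp only [Finset.mul_sum]
        rw [hw, Complex.zero_le_real]
        exact Complex.normSq_nonneg _
    have h2 := (h1 _ hJ).dotProduct_mulVec_nonneg (fun _ => 1)
    have hv : star (fun _ : Fin d => (1 : ℂ)) ⬝ᵥ ((Phi d t (Matrix.of fun _ _ => (1 : ℂ)))
        *ᵥ fun _ => 1) = (((1 + t) * d - d * d : ℝ) : ℂ) := by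
      rw [quad_eq]
      simp only [Phi, deph, Matrix.sub_apply, Matrix.smul_apply, diagonal_apply, Matrix.of_apply,
        smul_eq_mul, Pi.star_apply, star_one, one_mul, mul_one, mul_ite, mul_zero]
      simp [Finset.sum_ite_eq, Finset.sum_add_distrib, Finset.mul_sum]
      ring
    rw [hv, Complex.zero_le_real] at h2
    nlinarith
  tfae_have 3 → 2 := by
    intro h3
    refine .of_dotProduct_mulVec_nonneg (choi_herm d t) fun w => ?_
    rw [choi_form, Complex.zero_le_real]
    have hcs := cs_aux d (fun a => w (a, a))
    have hd' : (d : ℝ) ≤ 1 + t := by linarith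
    have hnn : (0 : ℝ) ≤ ∑ a, Complex.normSq (w (a, a)) :=
      Finset.sum_nonneg fun a _ => Complex.normSq_nonneg _
    nlinarith
  tfae_have 2 → 3 := by
    intro h2
    have := h2.dotProduct_mulVec_nonneg (fun p => if p.1 = p.2 then (1 : ℂ) else 0)
    rw [choi_form] at this
    simp only [eq_self_iff_true, if_true, ite_true, Complex.normSq_one, Finset.sum_const,
      Finset.card_univ, Fintype.card_fin, nsmul_eq_mul, mul_one] at this
    rw [Complex.zero_le_real] at this
    have hns : Complex.normSq ((d : ℕ) : ℂ) = (d : ℝ) * d := by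
      simp [Complex.normSq_apply]
    rw [hns] at this
    nlinarith
  tfae_finish
end

section
/- Let ψ ∈ ℂ^d be a unit vector and let n = |{x ∈ Fin d : ψ_x ≠ 0}| ≥ 1 be the number of nonzero entries of ψ. Then the Δ-robustness of the pure state ψψ† equals n − 1: inf{t ≥ 0 : (1+t)Δ(ψψ†) − ψψ† is positive semidefinite} = n − 1. -/
open Matrix ComplexOrder

lemma quad_form (d : ℕ) (c : ℝ) (ψ v : Fin d → ℂ) :
    star v ⬝ᵥ (((c:ℂ) • deph (Matrix.vecMulVec ψ (star ψ)) - Matrix.vecMulVec ψ (star ψ)) *ᵥ v)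
    = ((c * ∑ x, Complex.normSq (ψ x) * Complex.normSq (v x)
        - Complex.normSq (∑ x, (starRingEnd ℂ) (v x) * ψ x) : ℝ) : ℂ) := by
  have hB : ((starRingEnd ℂ) (∑ x, (starRingEnd ℂ) (v x) * ψ x))
      = ∑ x, (starRingEnd ℂ) (ψ x) * v x := by
    simp [map_sum, mul_comm]
  rw [Complex.ofReal_sub, ← Complex.mul_conj, hB]
  simp only [dotProduct, Matrix.mulVec, dotProduct, Matrix.sub_apply, Matrix.smul_apply,
    deph, Matrix.diagonal_apply, Matrix.vecMulVec_apply, Pi.star_apply, RCLike.star_def,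
    smul_eq_mul, sub_mul, mul_sub, Finset.sum_sub_distrib, Finset.mul_sum,
    mul_ite, ite_mul, zero_mul, mul_zero, Finset.sum_ite_eq, Finset.mem_univ, if_true,
    Complex.ofReal_mul, Complex.ofReal_sum]
  congr 1
  · refine Finset.sum_congr rfl fun x _ => ?_
    rw [← Complex.mul_conj, ← Complex.mul_conj]
    ring
  · rw [Finset.sum_comm]
    refine Finset.sum_congr rfl fun i _ => ?_
    rw [Finset.sum_mul]
    refine Finset.sum_congr rfl fun x _ => ?_
    ring

lemma herm_form (d : ℕ) (c : ℝ) (ψ : Fin d → ℂ) :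
    (((c:ℝ):ℂ) • deph (Matrix.vecMulVec ψ (star ψ)) - Matrix.vecMulVec ψ (star ψ)).IsHermitian := by
  ext i j
  simp only [Matrix.conjTranspose_apply, Matrix.sub_apply, Matrix.smul_apply, deph,
    Matrix.diagonal_apply, Matrix.vecMulVec_apply, Pi.star_apply, RCLike.star_def,
    smul_eq_mul, star_sub, star_mul', apply_ite, star_zero, Complex.conj_ofReal,
    RingHomCompTriple.comp_apply, RingHom.id_apply, Complex.conj_conj, eq_comm (a := j)]
  ring_nf
  split
  · rename_i h; subst h; ring
  · rfl

/-- For a pure state `ψ` with exactly `n ≥ 1` nonzero amplitudes, the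
Δ-robustness of coherence of `ψψ†` equals `n − 1`. -/
theorem stmt_14 (d : ℕ) (ψ : Fin d → ℂ) (hψ : ∑ x, Complex.normSq (ψ x) = 1)
    (n : ℕ) (hn : n = (Finset.univ.filter fun x => ψ x ≠ 0).card) (hn1 : 1 ≤ n) :
    sInf {t : ℝ | 0 ≤ t ∧
        (((1 + t : ℝ) : ℂ) • deph (Matrix.vecMulVec ψ (star ψ))
          - Matrix.vecMulVec ψ (star ψ)).PosSemidef}
      = (n : ℝ) - 1 := by
  have hnpos : (0:ℝ) < n := by exact_mod_cast hn1
  have hset : {t : ℝ | 0 ≤ t ∧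
        (((1 + t : ℝ) : ℂ) • deph (Matrix.vecMulVec ψ (star ψ))
          - Matrix.vecMulVec ψ (star ψ)).PosSemidef} = Set.Ici ((n:ℝ) - 1) := by
    ext t
    simp only [Set.mem_setOf_eq, Set.mem_Ici]
    constructor
    · rintro ⟨ht0, hpsd⟩
      set v : Fin d → ℂ := fun x => ((starRingEnd ℂ) (ψ x))⁻¹ with hv
      have hA : ∑ x, Complex.normSq (ψ x) * Complex.normSq (v x) = n := by
        rw [hn]
        rw [← Finset.sum_boole]
        refine Finset.sum_congr rfl fun x _ => ?_
        by_cases h : ψ x = 0 <;>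
          simp [hv, h, Complex.normSq_inv, Complex.normSq_conj,
            mul_inv_cancel₀, Complex.normSq_eq_zero]
      have hB : (∑ x, (starRingEnd ℂ) (v x) * ψ x) = (n:ℂ) := by
        rw [hn]
        rw [show ((((Finset.univ.filter fun x => ψ x ≠ 0).card : ℕ)):ℂ)
            = ∑ x, if ψ x ≠ 0 then (1:ℂ) else 0 by rw [Finset.sum_boole]]
        refine Finset.sum_congr rfl fun x _ => ?_
        by_cases h : ψ x = 0 <;> simp [hv, h, map_inv₀, inv_mul_cancel₀]
      have hq := hpsd.dotProduct_mulVec_nonneg v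
      rw [quad_form, hA, hB] at hq
      rw [Complex.zero_le_real] at hq
      have hns : Complex.normSq ((n:ℕ):ℂ) = (n:ℝ)*(n:ℝ) := by
        rw [Complex.normSq_natCast]
      rw [hns] at hq
      nlinarith
    · intro ht
      have hn1r : (1:ℝ) ≤ (n:ℝ) := by exact_mod_cast hn1
      have ht0 : (0:ℝ) ≤ t := by linarith
      refine ⟨ht0, Matrix.PosSemidef.of_dotProduct_mulVec_nonneg (herm_form d (1+t) ψ) fun v => ?_⟩
      rw [quad_form, Complex.zero_le_real]
      set S := Finset.univ.filter fun x => ψ x ≠ 0 with hS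
      have hA0 : (0:ℝ) ≤ ∑ x, Complex.normSq (ψ x) * Complex.normSq (v x) :=
        Finset.sum_nonneg fun x _ => mul_nonneg (Complex.normSq_nonneg _) (Complex.normSq_nonneg _)
      have hBsum : (∑ x, (starRingEnd ℂ) (v x) * ψ x)
          = ∑ x ∈ S, (starRingEnd ℂ) (v x) * ψ x := by
        symm
        apply Finset.sum_subset (Finset.subset_univ _)
        intro x _ hx
        simp only [hS, Finset.mem_filter, Finset.mem_univ, true_and, not_not] at hx
        simp [hx]
      have hnorm : Complex.normSq (∑ x, (starRingEnd ℂ) (v x) * ψ x)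
          ≤ (n:ℝ) * ∑ x, Complex.normSq (ψ x) * Complex.normSq (v x) := by
        rw [hBsum]
        have h1 : ‖∑ x ∈ S, (starRingEnd ℂ) (v x) * ψ x‖
            ≤ ∑ x ∈ S, ‖(starRingEnd ℂ) (v x) * ψ x‖ := norm_sum_le _ _
        have h2 : (∑ x ∈ S, ‖(starRingEnd ℂ) (v x) * ψ x‖)^2
            ≤ (S.card : ℝ) * ∑ x ∈ S, ‖(starRingEnd ℂ) (v x) * ψ x‖^2 := by
          exact sq_sum_le_card_mul_sum_sq
        have h3 : ∑ x ∈ S, ‖(starRingEnd ℂ) (v x) * ψ x‖^2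
            ≤ ∑ x, Complex.normSq (ψ x) * Complex.normSq (v x) := by
          have : ∀ x, ‖(starRingEnd ℂ) (v x) * ψ x‖^2
              = Complex.normSq (ψ x) * Complex.normSq (v x) := by
            intro x
            rw [norm_mul, mul_pow,
              Complex.sq_norm, Complex.sq_norm]
            simp [Complex.normSq_conj, mul_comm]
          simp only [this]
          exact Finset.sum_le_sum_of_subset_of_nonneg (Finset.subset_univ _)
            fun x _ _ => mul_nonneg (Complex.normSq_nonneg _) (Complex.normSq_nonneg _)
        have hcardn : (S.card : ℝ) = (n:ℝ) := by rw [hn]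
        calc Complex.normSq (∑ x ∈ S, (starRingEnd ℂ) (v x) * ψ x)
            = ‖∑ x ∈ S, (starRingEnd ℂ) (v x) * ψ x‖^2 := by
              rw [Complex.sq_norm]
          _ ≤ (∑ x ∈ S, ‖(starRingEnd ℂ) (v x) * ψ x‖)^2 := by
              apply pow_le_pow_left₀ (norm_nonneg _) h1
          _ ≤ (S.card : ℝ) * ∑ x ∈ S, ‖(starRingEnd ℂ) (v x) * ψ x‖^2 := h2
          _ ≤ (n:ℝ) * ∑ x, Complex.normSq (ψ x) * Complex.normSq (v x) := by
              rw [hcardn]; exact mul_le_mul_of_nonneg_left h3 (le_of_lt hnpos)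
      nlinarith
  rw [hset, csInf_Ici]
end

section
/- Let ρ be a d×d density matrix all of whose entries are real and nonnegative. Then the robustness of coherence of ρ equals its ℓ₁-coherence: inf{t ≥ 0 : there exists a positive semidefinite σ with trace 1 such that ρ + tσ is diagonal} = Σ_{j ≠ k} ρ_{jk}. -/
open Matrix Finset ComplexOrder


lemma aux_swap {d : ℕ} (f : Fin d → Fin d → ℂ) :
    (∑ j, ∑ k ∈ univ.erase j, f j k) = ∑ j, ∑ k ∈ univ.erase j, f k j := by
  have h1 : ∀ g : Fin d → Fin d → ℂ, (∑ j, ∑ k ∈ univ.erase j, g j k)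
      = ∑ j, ∑ k, if k ≠ j then g j k else 0 := by
    intro g; refine Finset.sum_congr rfl fun j _ => ?_
    rw [← Finset.sum_filter, Finset.filter_ne']
  rw [h1, h1, Finset.sum_comm]
  simp_rw [ne_comm]

lemma aux_psd {d : ℕ} (ρ : Matrix (Fin d) (Fin d) ℂ)
    (hsymm : ∀ j k, ρ k j = ρ j k) (hre : ∀ j k, (ρ j k).im = 0)
    (hnn : ∀ j k, 0 ≤ (ρ j k).re) :
    (Matrix.of fun j k => if j = k then ∑ l ∈ univ.erase j, ρ j l else -(ρ j k)).PosSemidef := by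
  have hR : ∀ j k, ρ j k = ((ρ j k).re : ℂ) := fun j k => by
    apply Complex.ext <;> simp [hre]
  refine .of_dotProduct_mulVec_nonneg ?_ ?_
  · ext j k
    by_cases h : j = k
    · subst h
      simp only [conjTranspose_apply, of_apply, if_pos rfl, if_true, eq_self_iff_true, star_sum]
      exact Finset.sum_congr rfl fun l _ => by
        rw [hsymm, hR]; exact Complex.conj_ofReal _
    · simp only [conjTranspose_apply, of_apply, if_neg h, if_neg (Ne.symm h), star_neg]
      rw [hsymm, hR]
      simp [Complex.conj_ofReal]
  · intro x
    have key : star x ⬝ᵥ (Matrix.of fun j k => if j = k then ∑ l ∈ univ.erase j, ρ j l else -(ρ j k)) *ᵥ x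
        = ∑ j, ∑ k ∈ univ.erase j, ρ j k * (star (x j) * x j - star (x j) * x k) := by
      simp only [dotProduct, mulVec, of_apply, Pi.star_apply]
      refine Finset.sum_congr rfl fun j _ => ?_
      rw [show (∑ k, (if j = k then ∑ l ∈ univ.erase j, ρ j l else -(ρ j k)) * x k)
          = (∑ l ∈ univ.erase j, ρ j l) * x j + ∑ k ∈ univ.erase j, -(ρ j k) * x k by
        rw [← Finset.add_sum_erase _ _ (Finset.mem_univ j), if_pos rfl]
        exact congrArg _ (Finset.sum_congr rfl fun k hk => by
          rw [if_neg (Finset.ne_of_mem_erase hk).symm])]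
      rw [mul_add, Finset.sum_mul, Finset.mul_sum, Finset.mul_sum, ← Finset.sum_add_distrib]
      exact Finset.sum_congr rfl fun k _ => by ring
    have h2 : (0:ℂ) ≤ (∑ j, ∑ k ∈ univ.erase j, ρ j k * (star (x j) * x j - star (x j) * x k))
        + (∑ j, ∑ k ∈ univ.erase j, ρ j k * (star (x j) * x j - star (x j) * x k)) := by
      nth_rewrite 2 [aux_swap]
      rw [← Finset.sum_add_distrib]
      refine Finset.sum_nonneg fun j _ => ?_
      rw [← Finset.sum_add_distrib]
      refine Finset.sum_nonneg fun k _ => ?_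
      rw [show ρ k j * (star (x k) * x k - star (x k) * x j)
          = ρ j k * (star (x k) * x k - star (x k) * x j) by rw [hsymm]]
      rw [← mul_add, show (star (x j) * x j - star (x j) * x k) + (star (x k) * x k - star (x k) * x j)
          = star (x j - x k) * (x j - x k) by simp only [star_sub]; ring]
      refine mul_nonneg ?_ ?_
      · rw [hR]; exact_mod_cast hnn j k
      · rw [Complex.star_def, ← Complex.normSq_eq_conj_mul_self]
        exact_mod_cast Complex.normSq_nonneg _
    rw [key]
    have h3 : (0:ℂ) ≤ (2:ℂ)⁻¹ := by
      rw [show ((2:ℂ))⁻¹ = ((2⁻¹:ℝ):ℂ) by norm_num]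
      exact_mod_cast (by norm_num : (0:ℝ) ≤ 2⁻¹)
    have h4 := mul_nonneg h3 h2
    rwa [show ∀ Q : ℂ, (2:ℂ)⁻¹ * (Q + Q) = Q from fun Q => by ring] at h4

lemma aux_smul {d : ℕ} {M : Matrix (Fin d) (Fin d) ℂ} (hM : M.PosSemidef) {c : ℝ} (hc : 0 ≤ c) :
    (((c : ℝ) : ℂ) • M).PosSemidef := by
  refine .of_dotProduct_mulVec_nonneg ?_ ?_
  · show (((c:ℝ):ℂ) • M)ᴴ = ((c:ℝ):ℂ) • M
    rw [conjTranspose_smul, hM.1]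
    congr 1
    simp [Complex.conj_ofReal]
  · intro x
    rw [smul_mulVec, dotProduct_smul, smul_eq_mul]
    exact mul_nonneg (by exact_mod_cast hc) (hM.dotProduct_mulVec_nonneg x)

/-- For a density matrix `ρ` with real nonnegative entries, the robustness of
coherence equals the `ℓ₁`-coherence `Σ_{j ≠ k} ρ_{jk}`. -/
theorem stmt_15 (d : ℕ) (ρ : Matrix (Fin d) (Fin d) ℂ)
    (hρ : ρ.PosSemidef) (htr : ρ.trace = 1)
    (hreal : ∀ j k, (ρ j k).im = 0) (hnonneg : ∀ j k, 0 ≤ (ρ j k).re) :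
    sInf {t : ℝ | 0 ≤ t ∧ ∃ σ : Matrix (Fin d) (Fin d) ℂ,
        σ.PosSemidef ∧ σ.trace = 1 ∧ (ρ + (t : ℂ) • σ).IsDiag}
      = ∑ j, ∑ k ∈ univ.filter (fun k => k ≠ j), (ρ j k).re := by
  have hR : ∀ j k, ρ j k = ((ρ j k).re : ℂ) := fun j k => by
    apply Complex.ext <;> simp [hreal]
  have hsymm : ∀ j k, ρ k j = ρ j k := fun j k => by
    have h1 : ρᴴ k j = ρ k j := by rw [hρ.1]
    rw [← h1, conjTranspose_apply, hR j k, Complex.star_def, Complex.conj_ofReal]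
  have hfil : ∀ j : Fin d, univ.filter (fun k => k ≠ j) = (univ : Finset (Fin d)).erase j :=
    fun j => Finset.filter_ne' _ _
  set S : ℝ := ∑ j, ∑ k ∈ univ.filter (fun k => k ≠ j), (ρ j k).re with hSdef
  have hS0 : 0 ≤ S := Finset.sum_nonneg fun j _ => Finset.sum_nonneg fun k _ => hnonneg j k
  have hScast : ((S : ℝ) : ℂ) = ∑ j, ∑ k ∈ univ.erase j, ρ j k := by
    rw [hSdef]
    push_cast
    exact Finset.sum_congr rfl fun j _ => by
      rw [hfil]
      exact Finset.sum_congr rfl fun k _ => (hR j k).symm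
  -- membership
  have hmem : S ∈ {t : ℝ | 0 ≤ t ∧ ∃ σ : Matrix (Fin d) (Fin d) ℂ,
      σ.PosSemidef ∧ σ.trace = 1 ∧ (ρ + (t : ℂ) • σ).IsDiag} := by
    refine ⟨hS0, ?_⟩
    by_cases hS : S = 0
    · refine ⟨ρ, hρ, htr, fun j k hjk => ?_⟩
      have hz : ∀ j ∈ (univ : Finset (Fin d)), ∀ k ∈ univ.filter (fun k => k ≠ j), (ρ j k).re = 0 := by
        have := (Finset.sum_eq_zero_iff_of_nonneg
          (fun j _ => Finset.sum_nonneg fun k _ => hnonneg j k)).1 (hSdef ▸ hS)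
        intro j hj k hk
        exact (Finset.sum_eq_zero_iff_of_nonneg (fun k _ => hnonneg j k)).1 (this j hj) k hk
      have : ρ j k = 0 := by
        apply Complex.ext
        · exact hz j (mem_univ j) k (Finset.mem_filter.2 ⟨mem_univ k, Ne.symm hjk⟩)
        · simp [hreal]
      simp [Matrix.add_apply, this, hS]
    · set M : Matrix (Fin d) (Fin d) ℂ :=
        Matrix.of fun j k => if j = k then ∑ l ∈ univ.erase j, ρ j l else -(ρ j k) with hMdef
      have hM := aux_psd ρ hsymm hreal hnonneg
      have htrM : M.trace = ((S:ℝ):ℂ) := by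
        rw [hScast]
        simp only [Matrix.trace, Matrix.diag]
        exact Finset.sum_congr rfl fun j _ => by simp [hMdef]
      refine ⟨((S⁻¹ : ℝ) : ℂ) • M, aux_smul hM (inv_nonneg.2 hS0), ?_, ?_⟩
      · rw [trace_smul, htrM, smul_eq_mul, ← Complex.ofReal_mul, inv_mul_cancel₀ hS]
        norm_num
      · intro j k hjk
        rw [Matrix.add_apply, Matrix.smul_apply, Matrix.smul_apply, smul_eq_mul, smul_eq_mul,
          ← mul_assoc, ← Complex.ofReal_mul, mul_inv_cancel₀ hS]
        simp only [Complex.ofReal_one, one_mul, hMdef, Matrix.of_apply, if_neg hjk]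
        ring
  -- lower bound
  have hlb : ∀ t ∈ {t : ℝ | 0 ≤ t ∧ ∃ σ : Matrix (Fin d) (Fin d) ℂ,
      σ.PosSemidef ∧ σ.trace = 1 ∧ (ρ + (t : ℂ) • σ).IsDiag}, S ≤ t := by
    rintro t ⟨ht0, σ, hσ, hσtr, hdiag⟩
    have h := hσ.dotProduct_mulVec_nonneg (fun _ => 1)
    simp only [dotProduct, mulVec, Pi.star_apply, star_one, one_mul, mul_one] at h
    have h2 : (0:ℂ) ≤ (t:ℂ) * ∑ j, ∑ k, σ j k :=
      mul_nonneg (by exact_mod_cast ht0) h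
    have hoff : ∀ j k : Fin d, j ≠ k → (t:ℂ) * σ j k = -(ρ j k) := by
      intro j k hjk
      have h0 : (ρ + (t:ℂ) • σ) j k = 0 := hdiag hjk
      rw [Matrix.add_apply, Matrix.smul_apply, smul_eq_mul] at h0
      linear_combination h0
    have h3 : (t:ℂ) * ∑ j, ∑ k, σ j k = (t:ℂ) - ((S:ℝ):ℂ) := by
      rw [Finset.mul_sum]
      have : ∀ j : Fin d, (t:ℂ) * ∑ k, σ j k
          = (t:ℂ) * σ j j + ∑ k ∈ univ.erase j, -(ρ j k) := by
        intro j
        rw [← Finset.add_sum_erase _ _ (Finset.mem_univ j), mul_add, Finset.mul_sum]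
        congr 1
        exact Finset.sum_congr rfl fun k hk => hoff j k (Finset.ne_of_mem_erase hk).symm
      have hdsum : (∑ j, σ j j) = (1:ℂ) := by
        simpa [Matrix.trace, Matrix.diag] using hσtr
      rw [Finset.sum_congr rfl fun j _ => this j, Finset.sum_add_distrib, ← Finset.mul_sum,
        hdsum, mul_one]
      rw [show (∑ x, ∑ k ∈ univ.erase x, -ρ x k) = -∑ x, ∑ k ∈ univ.erase x, ρ x k by
        simp [Finset.sum_neg_distrib], ← hScast]
      ring
    rw [h3] at h2
    have : ((0:ℝ):ℂ) ≤ ((t - S : ℝ) : ℂ) := by push_cast; simpa using h2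
    have := (Complex.real_le_real.1 this)
    linarith
  exact le_antisymm (csInf_le ⟨S, fun t ht => hlb t ht⟩ hmem) (le_csInf ⟨S, hmem⟩ hlb)
end

section
/- Let E(ρ) = Σ_j M_j ρ M_j† be the channel of a Kraus family on ℂ^d. Then E(uρu†) = u E(ρ) u† for every diagonal unitary u and every d×d matrix ρ (E is covariant under the group N of diagonal unitaries) if and only if E admits a Kraus representation in which every Kraus operator is either a diagonal matrix or of the form b·|x⟩⟨x'| for some b ∈ ℂ and indices x ≠ x'. -/
open Matrix

namespace Stmt17Aux
variable {d n : ℕ}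

variable {d n : ℕ}

lemma diag_sandwich (f g : Fin d → ℂ) (ρ : Matrix (Fin d) (Fin d) ℂ) (p q : Fin d) :
    (diagonal f * ρ * (diagonal g)ᴴ) p q = f p * ρ p q * (starRingEnd ℂ) (g q) := by
  rw [diagonal_conjTranspose, mul_diagonal, diagonal_mul]
  simp [Pi.star_def, mul_assoc]

lemma mid_sandwich (A B : Matrix (Fin d) (Fin d) ℂ) (x x' a b : Fin d) (c : ℂ) :
    (A * Matrix.single x x' c * Bᴴ) a b = A a x * c * (starRingEnd ℂ) (B b x') := by
  simp [Matrix.mul_apply, Matrix.conjTranspose_apply, Matrix.single, Matrix.of_apply,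
    ite_and, Finset.mul_sum, Finset.sum_mul, mul_assoc]

lemma diag_conj_std (f : Fin d → ℂ) (x x' : Fin d) (c : ℂ) :
    diagonal f * Matrix.single x x' c * (diagonal f)ᴴ =
      Matrix.single x x' (f x * c * (starRingEnd ℂ) (f x')) := by
  ext p q
  rw [diag_sandwich]
  simp only [Matrix.single, Matrix.of_apply]
  split_ifs with h
  · obtain ⟨rfl, rfl⟩ := h; ring
  · simp

lemma scalar_cov (M : Fin n → Matrix (Fin d) (Fin d) ℂ)
    (hcov : ∀ u : Matrix (Fin d) (Fin d) ℂ,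
        u.IsDiag → u ∈ Matrix.unitaryGroup (Fin d) ℂ →
        ∀ ρ : Matrix (Fin d) (Fin d) ℂ,
          (∑ j, M j * (u * ρ * uᴴ) * (M j)ᴴ) = u * (∑ j, M j * ρ * (M j)ᴴ) * uᴴ)
    (f : Fin d → ℂ) (hf : ∀ i, f i * (starRingEnd ℂ) (f i) = 1)
    (a b x x' : Fin d) :
    f x * (starRingEnd ℂ) (f x') * (∑ j, M j a x * (starRingEnd ℂ) (M j b x')) =
      f a * (starRingEnd ℂ) (f b) * (∑ j, M j a x * (starRingEnd ℂ) (M j b x')) := by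
  have huni : diagonal f ∈ Matrix.unitaryGroup (Fin d) ℂ := by
    rw [Matrix.mem_unitaryGroup_iff, Matrix.star_eq_conjTranspose, diagonal_conjTranspose,
      diagonal_mul_diagonal]
    ext i j
    rcases eq_or_ne i j with rfl | h
    · simpa [Complex.star_def] using hf i
    · simp [Matrix.diagonal_apply_ne _ h, Matrix.one_apply_ne h]
  have h := hcov (diagonal f) (isDiag_diagonal f) huni (Matrix.single x x' 1)
  rw [diag_conj_std] at h
  have h2 := Matrix.ext_iff.mpr h a b
  rw [Matrix.sum_apply, diag_sandwich, Matrix.sum_apply] at h2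
  simp only [mid_sandwich] at h2
  calc f x * (starRingEnd ℂ) (f x') * ∑ j, M j a x * (starRingEnd ℂ) (M j b x')
      = ∑ j, M j a x * (f x * 1 * (starRingEnd ℂ) (f x')) * (starRingEnd ℂ) (M j b x') := by
        rw [Finset.mul_sum]; exact Finset.sum_congr rfl fun j _ => by ring
    _ = f a * (∑ j, M j a x * 1 * (starRingEnd ℂ) (M j b x')) * (starRingEnd ℂ) (f b) := h2
    _ = f a * (starRingEnd ℂ) (f b) * ∑ j, M j a x * (starRingEnd ℂ) (M j b x') := by
        simp only [mul_one]; ring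

lemma vanish (M : Fin n → Matrix (Fin d) (Fin d) ℂ)
    (hcov : ∀ u : Matrix (Fin d) (Fin d) ℂ,
        u.IsDiag → u ∈ Matrix.unitaryGroup (Fin d) ℂ →
        ∀ ρ : Matrix (Fin d) (Fin d) ℂ,
          (∑ j, M j * (u * ρ * uᴴ) * (M j)ᴴ) = u * (∑ j, M j * ρ * (M j)ᴴ) * uᴴ)
    (a x b x' : Fin d)
    (hne : (∑ j, M j a x * (starRingEnd ℂ) (M j b x')) ≠ 0) :
    (a = x ∧ b = x') ∨ (x = x' ∧ a = b) := by
  by_cases hxx : x = x'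
  · subst hxx
    refine Or.inr ⟨rfl, ?_⟩
    by_contra hab
    set f : Fin d → ℂ := fun i => if i = a then -1 else 1 with hfdef
    have hf : ∀ i, f i * (starRingEnd ℂ) (f i) = 1 := by
      intro i; simp only [hfdef]; split_ifs <;> simp
    have h := scalar_cov M hcov f hf a b x x
    have hfa : f a = -1 := by simp [hfdef]
    have hfb : f b = 1 := by simp [hfdef, Ne.symm hab]
    rw [hf x, hfa, hfb, _root_.map_one, mul_one] at h
    exact hne (by linear_combination h / 2)
  · -- x ≠ x'
    left
    have step : ∀ g : Fin d → ℂ, (∀ i, g i * (starRingEnd ℂ) (g i) = 1) →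
        g x * (starRingEnd ℂ) (g x') = g a * (starRingEnd ℂ) (g b) := by
      intro g hg
      exact mul_right_cancel₀ hne (scalar_cov M hcov g hg a b x x')
    have hf1 : ∀ i, ((if i = x then Complex.I else 1) : ℂ) *
        (starRingEnd ℂ) (if i = x then Complex.I else 1) = 1 := by
      intro i; split_ifs <;> simp [Complex.conj_I, Complex.I_mul_I]
    have hf2 : ∀ i, ((if i = x' then Complex.I else 1) : ℂ) *
        (starRingEnd ℂ) (if i = x' then Complex.I else 1) = 1 := by
      intro i; split_ifs <;> simp [Complex.conj_I, Complex.I_mul_I]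
    have hx'x : ¬ x' = x := fun h => hxx h.symm
    have e1 := step (fun i => if i = x then Complex.I else 1) hf1
    simp only [eq_self_iff_true, if_true, hx'x, if_false, _root_.map_one, mul_one] at e1
    have e2 := step (fun i => if i = x' then Complex.I else 1) hf2
    simp only [eq_self_iff_true, if_true, hxx, if_false, Complex.conj_I, one_mul] at e2
    refine ⟨?_, ?_⟩
    · by_contra ha
      simp only [ha, if_false, one_mul] at e1
      by_cases hb : b = x
      · simp only [hb, if_true, eq_self_iff_true, Complex.conj_I] at e1
        norm_num [Complex.ext_iff] at e1
      · simp only [hb, if_false, _root_.map_one] at e1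
        norm_num [Complex.ext_iff] at e1
    · by_contra hb'
      simp only [hb', if_false, _root_.map_one, mul_one] at e2
      by_cases ha' : a = x'
      · simp only [ha', if_true, eq_self_iff_true] at e2
        norm_num [Complex.ext_iff] at e2
      · simp only [ha', if_false] at e2
        norm_num [Complex.ext_iff] at e2


variable {d n : ℕ}

lemma std_sandwich (x x' p q : Fin d) (c : ℂ) (ρ : Matrix (Fin d) (Fin d) ℂ) :
    (Matrix.single x x' c * ρ * (Matrix.single x x' c)ᴴ) p q =
      if x = p ∧ x = q then c * (starRingEnd ℂ) c * ρ x' x' else 0 := by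
  simp [Matrix.mul_apply, Matrix.conjTranspose_apply, Matrix.single, Matrix.of_apply,
    ite_and, Finset.mul_sum, Finset.sum_mul, mul_assoc, apply_ite (starRingEnd ℂ),
    mul_ite, ite_mul, mul_zero, zero_mul]
  split_ifs <;> ring

lemma sandwich_entry (A B ρ : Matrix (Fin d) (Fin d) ℂ) (a b : Fin d) :
    (A * ρ * Bᴴ) a b = ∑ p, ∑ q, A a p * ρ p q * (starRingEnd ℂ) (B b q) := by
  simp only [Matrix.mul_apply, Matrix.conjTranspose_apply, Finset.sum_mul, Complex.star_def]
  rw [Finset.sum_comm]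


lemma sum_split (g : Fin d → ℂ) (p : Fin d) :
    g p + ∑ x, (if x = p then 0 else g x) = ∑ x, g x := by
  have h : ∀ x, g x = (if x = p then g x else 0) + (if x = p then 0 else g x) :=
    fun x => by split_ifs <;> simp
  rw [Finset.sum_congr rfl fun x _ => h x, Finset.sum_add_distrib,
    Finset.sum_ite_eq' Finset.univ p g]
  simp

noncomputable def newK (M : Fin n → Matrix (Fin d) (Fin d) ℂ) :
    Fin n ⊕ Fin n × Fin d × Fin d → Matrix (Fin d) (Fin d) ℂ
  | Sum.inl j => diagonal fun i => M j i i
  | Sum.inr (j, x, x') => if x = x' then 0 else Matrix.single x x' (M j x x')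

lemma stdCTmul (x x' p q : Fin d) (c : ℂ) :
    ((Matrix.single x x' c)ᴴ * Matrix.single x x' c) p q =
      if x' = p ∧ x' = q then (starRingEnd ℂ) c * c else 0 := by
  simp [Matrix.mul_apply, Matrix.conjTranspose_apply, Matrix.single, Matrix.of_apply,
    ite_and, apply_ite (starRingEnd ℂ), mul_ite, ite_mul, mul_zero, zero_mul]
  split_ifs <;> ring

lemma trace_pres (M : Fin n → Matrix (Fin d) (Fin d) ℂ)
    (hK : ∑ j, (M j)ᴴ * M j = 1) :
    ∑ i, (newK M i)ᴴ * newK M i = 1 := by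
  ext p q
  rw [Matrix.sum_apply, Fintype.sum_sum_type]
  have hdiagterm : ∀ j : Fin n, ((newK M (Sum.inl j))ᴴ * newK M (Sum.inl j)) p q =
      if p = q then (starRingEnd ℂ) (M j p p) * M j p p else 0 := by
    intro j
    simp only [newK]
    rw [diagonal_conjTranspose, diagonal_mul_diagonal, diagonal_apply]
    split_ifs with h
    · subst h; simp [Pi.star_def]
    · rfl
  have hoffterm : ∀ (j : Fin n) (x x' : Fin d),
      ((newK M (Sum.inr (j, x, x')))ᴴ * newK M (Sum.inr (j, x, x'))) p q =
      if x' = p then (if p = q then (if x = p then 0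
        else (starRingEnd ℂ) (M j x p) * M j x p) else 0) else 0 := by
    intro j x x'
    simp only [newK]
    by_cases h1 : x = x'
    · simp only [h1, if_pos rfl]
      by_cases h2 : x' = p
      · subst h2; simp
      · simp [h2]
    · rw [if_neg h1, stdCTmul]
      by_cases h2 : x' = p
      · subst h2
        by_cases h3 : x' = q
        · subst h3
          simp [if_neg (fun h : x = x' => h1 h)]
        · simp [h3, (fun h : x' = q => h3 h)]
      · simp [h2, fun h : x' = p ∧ x' = q => h2 h.1]
  simp only [hdiagterm, hoffterm]
  simp only [Fintype.sum_prod_type]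
  by_cases hpq : p = q
  · subst hpq
    simp only [eq_self_iff_true, if_true]
    have collapse : ∀ j : Fin n, ∑ x : Fin d, ∑ x' : Fin d,
        (if x' = p then (if x = p then 0 else (starRingEnd ℂ) (M j x p) * M j x p) else 0) =
        ∑ x : Fin d, (if x = p then 0 else (starRingEnd ℂ) (M j x p) * M j x p) := by
      intro j
      exact Finset.sum_congr rfl fun x _ => by
        rw [Finset.sum_ite_eq' Finset.univ p
          (fun _ => if x = p then 0 else (starRingEnd ℂ) (M j x p) * M j x p)]
        simp
    conv_lhs => rw [Finset.sum_congr rfl fun j _ => collapse j]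
    rw [← Finset.sum_add_distrib]
    have : ∀ j : Fin n, ((starRingEnd ℂ) (M j p p) * M j p p +
        ∑ x : Fin d, (if x = p then 0 else (starRingEnd ℂ) (M j x p) * M j x p)) =
        ∑ x : Fin d, (starRingEnd ℂ) (M j x p) * M j x p :=
      fun j => sum_split (fun x => (starRingEnd ℂ) (M j x p) * M j x p) p
    rw [Finset.sum_congr rfl fun j _ => this j]
    have hK2 := Matrix.ext_iff.mpr hK p p
    rw [Matrix.sum_apply, Matrix.one_apply_eq] at hK2
    rw [Matrix.one_apply_eq, ← hK2]
    refine Finset.sum_congr rfl fun j _ => ?_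
    rw [Matrix.mul_apply]
    exact Finset.sum_congr rfl fun x _ => by rw [Matrix.conjTranspose_apply]; rfl
  · simp [hpq, Matrix.one_apply_ne hpq]

lemma channel_eq (M : Fin n → Matrix (Fin d) (Fin d) ℂ)
    (V : ∀ a x b x', (∑ j, M j a x * (starRingEnd ℂ) (M j b x')) ≠ 0 →
      (a = x ∧ b = x') ∨ (x = x' ∧ a = b))
    (ρ : Matrix (Fin d) (Fin d) ℂ) :
    ∑ i, newK M i * ρ * (newK M i)ᴴ = ∑ j, M j * ρ * (M j)ᴴ := by
  ext a b
  rw [Matrix.sum_apply, Matrix.sum_apply, Fintype.sum_sum_type]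
  -- right-hand side in double-sum form
  have hRHS : ∑ j, (M j * ρ * (M j)ᴴ) a b =
      ∑ x, ∑ x', ρ x x' * ∑ j, M j a x * (starRingEnd ℂ) (M j b x') := by
    calc ∑ j, (M j * ρ * (M j)ᴴ) a b
        = ∑ j, ∑ x, ∑ x', M j a x * ρ x x' * (starRingEnd ℂ) (M j b x') := by
          exact Finset.sum_congr rfl fun j _ => sandwich_entry (M j) (M j) ρ a b
      _ = ∑ x, ∑ j, ∑ x', M j a x * ρ x x' * (starRingEnd ℂ) (M j b x') := Finset.sum_comm
      _ = ∑ x, ∑ x', ∑ j, M j a x * ρ x x' * (starRingEnd ℂ) (M j b x') :=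
          Finset.sum_congr rfl fun x _ => Finset.sum_comm
      _ = ∑ x, ∑ x', ρ x x' * ∑ j, M j a x * (starRingEnd ℂ) (M j b x') := by
          refine Finset.sum_congr rfl fun x _ => Finset.sum_congr rfl fun x' _ => ?_
          rw [Finset.mul_sum]
          exact Finset.sum_congr rfl fun j _ => by ring
  rw [hRHS]
  -- diagonal part
  have hdiagterm : ∀ j : Fin n, (newK M (Sum.inl j) * ρ * (newK M (Sum.inl j))ᴴ) a b =
      M j a a * ρ a b * (starRingEnd ℂ) (M j b b) := by
    intro j
    simp only [newK]
    exact diag_sandwich _ _ ρ a b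
  have hdiagsum : ∑ j, (newK M (Sum.inl j) * ρ * (newK M (Sum.inl j))ᴴ) a b =
      ρ a b * ∑ j, M j a a * (starRingEnd ℂ) (M j b b) := by
    rw [Finset.sum_congr rfl fun j _ => hdiagterm j, Finset.mul_sum]
    exact Finset.sum_congr rfl fun j _ => by ring
  rw [hdiagsum]
  -- off-diagonal part
  have hoffterm : ∀ (j : Fin n) (x x' : Fin d),
      (newK M (Sum.inr (j, x, x')) * ρ * (newK M (Sum.inr (j, x, x')))ᴴ) a b =
      if x = a then (if a = b then (if x' = a then 0
        else M j a x' * (starRingEnd ℂ) (M j a x') * ρ x' x') else 0) else 0 := by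
    intro j x x'
    simp only [newK]
    by_cases h1 : x = x'
    · rw [if_pos h1]
      by_cases hxa : x = a
      · subst hxa
        simp [← h1]
      · simp [hxa]
    · rw [if_neg h1, std_sandwich]
      by_cases hxa : x = a
      · subst hxa
        by_cases hab : x = b
        · subst hab
          simp [if_neg (fun h : x' = x => h1 h.symm)]
        · simp [hab, fun h : x = x ∧ x = b => hab h.2]
      · simp [hxa, fun h : x = a ∧ x = b => hxa h.1]
  have hoffsum : ∑ y : Fin n × Fin d × Fin d,
      (newK M (Sum.inr y) * ρ * (newK M (Sum.inr y))ᴴ) a b =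
      if a = b then ∑ x' : Fin d, (if x' = a then 0
        else ρ x' x' * ∑ j, M j a x' * (starRingEnd ℂ) (M j a x')) else 0 := by
    rw [Fintype.sum_prod_type]
    simp only [Fintype.sum_prod_type]
    rw [Finset.sum_congr rfl fun j (_ : j ∈ Finset.univ) =>
      Finset.sum_congr rfl fun x (_ : x ∈ Finset.univ) =>
      Finset.sum_congr rfl fun x' (_ : x' ∈ Finset.univ) => hoffterm j x x']
    by_cases hab : a = b
    · subst hab
      simp only [eq_self_iff_true, if_true]
      rw [Finset.sum_comm]
      -- ∑ x, ∑ j, ∑ x' → collapse x = a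
      have hx : ∀ x : Fin d, (∑ j : Fin n, ∑ x' : Fin d, if x = a then
          (if x' = a then 0 else M j a x' * (starRingEnd ℂ) (M j a x') * ρ x' x') else 0) =
          if x = a then (∑ j : Fin n, ∑ x' : Fin d,
          (if x' = a then 0 else M j a x' * (starRingEnd ℂ) (M j a x') * ρ x' x')) else 0 := by
        intro x
        split_ifs with h
        · rfl
        · simp
      rw [Finset.sum_congr rfl fun x (_ : x ∈ Finset.univ) => hx x,
        Finset.sum_ite_eq' Finset.univ a]
      simp only [Finset.mem_univ, if_true]
      rw [Finset.sum_comm]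
      refine Finset.sum_congr rfl fun x' _ => ?_
      split_ifs with h
      · simp
      · rw [Finset.mul_sum]
        exact Finset.sum_congr rfl fun j _ => by ring
    · simp [hab]
  rw [hoffsum]
  by_cases hab : a = b
  · subst hab
    have hT : ∀ x x' : Fin d, ρ x x' * ∑ j, M j a x * (starRingEnd ℂ) (M j a x') =
        if x' = x then ρ x x * ∑ j, M j a x * (starRingEnd ℂ) (M j a x) else 0 := by
      intro x x'
      by_cases h : x' = x
      · subst h; simp
      · rcases eq_or_ne (∑ j, M j a x * (starRingEnd ℂ) (M j a x')) 0 with h0 | h0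
        · simp [h, h0]
        · rcases V a x a x' h0 with ⟨h1, h2⟩ | ⟨h1, _⟩
          · exact absurd (h2.symm.trans h1) h
          · exact absurd h1.symm h
    rw [Finset.sum_congr rfl fun x (_ : x ∈ Finset.univ) =>
      Finset.sum_congr rfl fun x' (_ : x' ∈ Finset.univ) => hT x x']
    simp only [Finset.sum_ite_eq' Finset.univ, Finset.mem_univ, if_true,
      eq_self_iff_true]
    exact sum_split (fun x => ρ x x * ∑ j, M j a x * (starRingEnd ℂ) (M j a x)) a
  · have hS : ∀ x x' : Fin d, ρ x x' * ∑ j, M j a x * (starRingEnd ℂ) (M j b x') =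
        if x' = b then (if x = a then
          ρ x x' * ∑ j, M j a x * (starRingEnd ℂ) (M j b x') else 0) else 0 := by
      intro x x'
      rcases eq_or_ne (∑ j, M j a x * (starRingEnd ℂ) (M j b x')) 0 with h0 | h0
      · simp only [h0, mul_zero]
        split_ifs <;> rfl
      · rcases V a x b x' h0 with ⟨h1, h2⟩ | ⟨_, h2⟩
        · rw [if_pos h2.symm, if_pos h1.symm]
        · exact absurd h2 hab
    rw [Finset.sum_congr rfl fun x (_ : x ∈ Finset.univ) =>
      Finset.sum_congr rfl fun x' (_ : x' ∈ Finset.univ) => hS x x']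
    simp only [Finset.sum_ite_eq' Finset.univ, Finset.mem_univ, if_true]
    simp [hab]


variable {d : ℕ}

lemma diag_unitary_entry {u : Matrix (Fin d) (Fin d) ℂ} (hd : u.IsDiag)
    (hu : u ∈ Matrix.unitaryGroup (Fin d) ℂ) (i : Fin d) :
    u i i * (starRingEnd ℂ) (u i i) = 1 := by
  have h := Matrix.mem_unitaryGroup_iff.mp hu
  have h2 := Matrix.ext_iff.mpr h i i
  rw [Matrix.star_eq_conjTranspose, Matrix.mul_apply, Matrix.one_apply_eq] at h2
  rw [← h2, Finset.sum_eq_single i]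
  · rfl
  · intro k _ hk
    rw [hd (Ne.symm hk)]
    simp
  · simp

lemma covariant_of_shapes {m : ℕ} (N : Fin m → Matrix (Fin d) (Fin d) ℂ)
    (hshape : ∀ k, (N k).IsDiag ∨
      ∃ (b : ℂ) (x x' : Fin d), x ≠ x' ∧ N k = Matrix.single x x' b)
    (u : Matrix (Fin d) (Fin d) ℂ) (hd : u.IsDiag) (hu : u ∈ Matrix.unitaryGroup (Fin d) ℂ)
    (ρ : Matrix (Fin d) (Fin d) ℂ) :
    ∑ k, N k * (u * ρ * uᴴ) * (N k)ᴴ = u * (∑ k, N k * ρ * (N k)ᴴ) * uᴴ := by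
  rw [Matrix.mul_sum, Matrix.sum_mul]
  refine Finset.sum_congr rfl fun k _ => ?_
  have hunit : ∀ i, u i i * (starRingEnd ℂ) (u i i) = 1 := diag_unitary_entry hd hu
  have hud : u = diagonal u.diag := hd.diagonal_diag.symm
  rcases hshape k with hdg | ⟨c, x, x', hxx, hNk⟩
  · rw [hud, ← hdg.diagonal_diag]
    ext p q
    rw [diag_sandwich, diag_sandwich, diag_sandwich, diag_sandwich]
    ring
  · rw [hNk, hud]
    ext p q
    rw [std_sandwich, diag_sandwich, diag_sandwich, std_sandwich]
    split_ifs with h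
    · obtain ⟨rfl, rfl⟩ := h
      have h1 := hunit x'
      have h2 := hunit x
      show c * (starRingEnd ℂ) c * (u.diag x' * ρ x' x' * (starRingEnd ℂ) (u.diag x')) =
        u.diag x * (c * (starRingEnd ℂ) c * ρ x' x') * (starRingEnd ℂ) (u.diag x)
      have e1 : u.diag x' * (starRingEnd ℂ) (u.diag x') = 1 := h1
      have e2 : u.diag x * (starRingEnd ℂ) (u.diag x) = 1 := h2
      linear_combination (c * (starRingEnd ℂ) c * ρ x' x') * e1 -
        (c * (starRingEnd ℂ) c * ρ x' x') * e2
    · simp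


end Stmt17Aux

open Stmt17Aux

/-- The channel of a Kraus family is covariant under all diagonal unitaries iff
it admits a Kraus representation in which every Kraus operator is either
diagonal or a scalar multiple of a matrix unit `|x⟩⟨x'|` with `x ≠ x'`. -/
theorem stmt_17 (d n : ℕ) (M : Fin n → Matrix (Fin d) (Fin d) ℂ)
    (hK : ∑ j, (M j)ᴴ * M j = 1) :
    (∀ u : Matrix (Fin d) (Fin d) ℂ,
        u.IsDiag → u ∈ Matrix.unitaryGroup (Fin d) ℂ →
        ∀ ρ : Matrix (Fin d) (Fin d) ℂ,
          (∑ j, M j * (u * ρ * uᴴ) * (M j)ᴴ) = u * (∑ j, M j * ρ * (M j)ᴴ) * uᴴ) ↔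
    (∃ (m : ℕ) (N : Fin m → Matrix (Fin d) (Fin d) ℂ),
        (∑ k, (N k)ᴴ * N k = 1) ∧
        (∀ ρ : Matrix (Fin d) (Fin d) ℂ,
          ∑ k, N k * ρ * (N k)ᴴ = ∑ j, M j * ρ * (M j)ᴴ) ∧
        (∀ k, (N k).IsDiag ∨
          ∃ (b : ℂ) (x x' : Fin d), x ≠ x' ∧ N k = Matrix.single x x' b)) := by
  constructor
  · intro hcov
    have V : ∀ a x b x' : Fin d, (∑ j, M j a x * (starRingEnd ℂ) (M j b x')) ≠ 0 →
        (a = x ∧ b = x') ∨ (x = x' ∧ a = b) := fun a x b x' h => vanish M hcov a x b x' h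
    refine ⟨Fintype.card (Fin n ⊕ Fin n × Fin d × Fin d),
      fun k => newK M ((Fintype.equivFin (Fin n ⊕ Fin n × Fin d × Fin d)).symm k),
      ?_, ?_, ?_⟩
    · rw [Equiv.sum_comp (Fintype.equivFin (Fin n ⊕ Fin n × Fin d × Fin d)).symm
        (fun i => (newK M i)ᴴ * newK M i)]
      exact trace_pres M hK
    · intro ρ
      rw [Equiv.sum_comp (Fintype.equivFin (Fin n ⊕ Fin n × Fin d × Fin d)).symm
        (fun i => newK M i * ρ * (newK M i)ᴴ)]
      exact channel_eq M V ρ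
    · intro k
      cases hik : (Fintype.equivFin (Fin n ⊕ Fin n × Fin d × Fin d)).symm k with
      | inl j =>
        left
        simp only [hik]
        simp only [newK]
        exact isDiag_diagonal _
      | inr y =>
        obtain ⟨j, x, x'⟩ := y
        simp only [hik]
        simp only [newK]
        by_cases h : x = x'
        · left
          rw [if_pos h]
          exact isDiag_zero
        · right
          exact ⟨M j x x', x, x', h, by rw [if_neg h]⟩
  · rintro ⟨m, N, h1, hrep, hshape⟩ u hd hu ρ
    rw [← hrep (u * ρ * uᴴ), ← hrep ρ]
    exact covariant_of_shapes N hshape u hd hu ρ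
end

section
/- Let d ≥ 2 and let ρ, σ be d×d density matrices such that ρ_{x x'} ≠ 0 for all x ≠ x' (which forces ρ_{xx} > 0 for all x since ρ is positive semidefinite). Define the d×d matrix Q by Q_{xx} = min{σ_{xx}/ρ_{xx}, 1} and Q_{x x'} = σ_{x x'} / ρ_{x x'} for x ≠ x'. Then there exists a Kraus family on ℂ^d, each of whose members is either a diagonal matrix or of the form b·|x⟩⟨x'| with x ≠ x', whose channel satisfies Σ_j M_j ρ M_j† = σ, if and only if Q is positive semidefinite. -/
open Matrix ComplexOrder
section
variable {m k : Type*} [Fintype m] [DecidableEq m] [Fintype k]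

lemma psd_diag_nonneg {M : Matrix m m ℂ} (hM : M.PosSemidef) (i : m) :
    0 ≤ M i i := by
  exact hM.diag_nonneg

lemma psd_diag_re {M : Matrix m m ℂ} (hM : M.PosSemidef) (i : m) :
    M i i = ((M i i).re : ℝ) := by
  have h := psd_diag_nonneg hM i
  rw [Complex.le_def] at h
  exact (Complex.re_add_im (M i i)) ▸ by simp [← h.2]

lemma psd_diag_re_nonneg {M : Matrix m m ℂ} (hM : M.PosSemidef) (i : m) :
    0 ≤ (M i i).re := by
  have h := psd_diag_nonneg hM i
  rw [Complex.le_def] at h; simpa using h.1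

lemma psd_row_zero {M : Matrix m m ℂ} (hM : M.PosSemidef) (i : m)
    (h : M i i = 0) (j : m) : M j i = 0 := by
  have h0 : star (Pi.single i 1 : m → ℂ) ⬝ᵥ M *ᵥ Pi.single i 1 = 0 := by
    simpa [dotProduct, Pi.single_apply, apply_ite, mulVec_single] using h
  have := (hM.dotProduct_mulVec_zero_iff _).mp h0
  have := congrFun this j
  simpa [mulVec_single] using this

lemma gram_psd (v : k → m → ℂ) :
    (Matrix.of fun x x' => ∑ j, v j x * (starRingEnd ℂ) (v j x')).PosSemidef := by
  have : (Matrix.of fun x x' => ∑ j, v j x * (starRingEnd ℂ) (v j x'))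
      = (Matrix.of fun (j : k) (x : m) => (starRingEnd ℂ) (v j x))ᴴ *
        (Matrix.of fun (j : k) (x : m) => (starRingEnd ℂ) (v j x)) := by
    ext x x'
    simp [Matrix.mul_apply, mul_comm]
  rw [this]
  exact posSemidef_conjTranspose_mul_self _

lemma diag_mul_rho_mul (A ρ : Matrix m m ℂ) (hA : A.IsDiag) (x x' : m) :
    (A * ρ * Aᴴ) x x' = A x x * ρ x x' * (starRingEnd ℂ) (A x' x') := by
  rw [Matrix.mul_apply]
  rw [Finset.sum_eq_single x']
  · rw [Matrix.mul_apply, Finset.sum_eq_single x]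
    · simp [conjTranspose_apply, mul_assoc]
    · intro z _ hz; rw [hA (Ne.symm hz)]; ring
    · simp
  · intro y _ hy
    rw [conjTranspose_apply, hA (Ne.symm hy)]
    simp
  · simp

lemma diag_conj_mul (A : Matrix m m ℂ) (hA : A.IsDiag) (x x' : m) :
    (Aᴴ * A) x x' = (starRingEnd ℂ) (A x x) * A x x' := by
  rw [Matrix.mul_apply, Finset.sum_eq_single x]
  · simp [conjTranspose_apply]
  · intro y _ hy; rw [conjTranspose_apply, hA hy]; simp
  · simp

lemma std_mul_rho_mul (ρ : Matrix m m ℂ) (a b : m) (c : ℂ) (x x' : m) :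
    (Matrix.single a b c * ρ * (Matrix.single a b c)ᴴ) x x' =
      if x = a ∧ x' = a then c * (starRingEnd ℂ) c * ρ b b else 0 := by
  simp only [Matrix.mul_apply, conjTranspose_apply, Matrix.single, Matrix.of_apply]
  simp [Finset.sum_ite_eq, ite_and, Finset.mul_sum, Finset.sum_ite_eq', apply_ite (starRingEnd ℂ)]
  split_ifs <;> try ring
  all_goals tauto

lemma std_conj_mul (a b : m) (c : ℂ) (x x' : m) :
    ((Matrix.single a b c)ᴴ * Matrix.single a b c) x x' =
      if x = b ∧ x' = b then (starRingEnd ℂ) c * c else 0 := by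
  simp only [Matrix.mul_apply, conjTranspose_apply, Matrix.single, Matrix.of_apply]
  simp [Finset.sum_ite_eq, ite_and, Finset.mul_sum, Finset.sum_ite_eq', apply_ite (starRingEnd ℂ)]
  split_ifs <;> try ring
  all_goals tauto

end

open scoped MatrixOrder in
lemma psd_exists_sqrt {n : Type*} [Fintype n] [DecidableEq n] {A : Matrix n n ℂ} (h : A.PosSemidef) :
    ∃ S : Matrix n n ℂ, A = star S * S := by
  obtain ⟨X, hX, -, hXA⟩ := CFC.exists_sqrt_of_isSelfAdjoint_of_quasispectrumRestricts
    (sub_zero A ▸ h.isHermitian : IsSelfAdjoint A) (QuasispectrumRestricts.nnreal_of_nonneg h.nonneg)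
  exact ⟨X, by rw [← hXA, hX.star_eq]⟩

lemma forward_dir (d : ℕ) (hd : 2 ≤ d) (ρ σ : Matrix (Fin d) (Fin d) ℂ)
    (hρ : ρ.PosSemidef) (hσ : σ.PosSemidef)
    (hoff : ∀ x x', x ≠ x' → ρ x x' ≠ 0)
    (n : ℕ) (M : Fin n → Matrix (Fin d) (Fin d) ℂ)
    (h1 : ∑ j, (M j)ᴴ * M j = 1)
    (hkind : ∀ j, (M j).IsDiag ∨
      ∃ (b : ℂ) (x x' : Fin d), x ≠ x' ∧ M j = Matrix.single x x' b)
    (h2 : (∑ j, M j * ρ * (M j)ᴴ) = σ) :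
    (Matrix.of fun x x' : Fin d =>
        if x = x' then ((min ((σ x x).re / (ρ x x).re) 1 : ℝ) : ℂ)
        else σ x x' / ρ x x').PosSemidef := by
  classical
  have hnt : Nontrivial (Fin d) := Fin.nontrivial_iff_two_le.mpr hd
  have hρpos : ∀ x, 0 < (ρ x x).re := by
    intro x
    rcases (psd_diag_re_nonneg hρ x).lt_or_eq with h | h
    · exact h
    · exfalso
      have hzz : ρ x x = 0 := by rw [psd_diag_re hρ x, ← h]; simp
      obtain ⟨y, hy⟩ := exists_ne x
      exact hoff y x hy (psd_row_zero hρ x hzz y)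
  set v : Fin n → Fin d → ℂ :=
    fun j => if h : (M j).IsDiag then (fun x => M j x x) else 0 with hv
  have hterm : ∀ j (x x' : Fin d), x ≠ x' →
      (M j * ρ * (M j)ᴴ) x x' = v j x * ρ x x' * (starRingEnd ℂ) (v j x') := by
    intro j x x' hxx
    by_cases h : (M j).IsDiag
    · simp only [hv, dif_pos h]
      exact diag_mul_rho_mul _ _ h x x'
    · rcases (hkind j).resolve_left h with ⟨b, a, a', hne, hM⟩
      simp only [hv, dif_neg h, Pi.zero_apply, zero_mul, map_zero, mul_zero]
      rw [hM, std_mul_rho_mul, if_neg]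
      rintro ⟨rfl, rfl⟩; exact hxx rfl
  set A : Matrix (Fin d) (Fin d) ℂ :=
    Matrix.of fun x x' => ∑ j, v j x * (starRingEnd ℂ) (v j x') with hA
  have hoffd : ∀ x x', x ≠ x' → A x x' = σ x x' / ρ x x' := by
    intro x x' hxx
    have : σ x x' = ∑ j, (M j * ρ * (M j)ᴴ) x x' := by
      rw [← h2]; simp [Matrix.sum_apply]
    rw [eq_div_iff (hoff x x' hxx)]
    rw [this, Finset.sum_congr rfl fun j _ => hterm j x x' hxx]
    simp only [hA, Matrix.of_apply, Finset.sum_mul]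
    exact Finset.sum_congr rfl fun j _ => by ring
  set α : Fin d → ℝ := fun x => ∑ j, Complex.normSq (v j x) with hα
  have hAxx : ∀ x, A x x = ((α x : ℝ) : ℂ) := by
    intro x
    simp only [hA, hα, Matrix.of_apply]
    push_cast
    exact Finset.sum_congr rfl fun j _ => (Complex.mul_conj _)
  have hσre : ∀ x, α x * (ρ x x).re ≤ (σ x x).re := by
    intro x
    have hs : (σ x x).re = ∑ j, ((M j * ρ * (M j)ᴴ) x x).re := by
      rw [← h2]; simp [Matrix.sum_apply, Complex.re_sum]
    rw [hs, hα, Finset.sum_mul]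
    refine Finset.sum_le_sum fun j _ => ?_
    by_cases h : (M j).IsDiag
    · have := diag_mul_rho_mul (M j) ρ h x x
      rw [this]
      have hvv : M j x x * ρ x x * (starRingEnd ℂ) (M j x x)
          = (Complex.normSq (M j x x) : ℂ) * ρ x x := by
        rw [← Complex.mul_conj]; ring
      rw [hvv, psd_diag_re hρ x]
      simp only [hv, dif_pos h]
      rw [← Complex.ofReal_mul]
      simp
    · rcases (hkind j).resolve_left h with ⟨b, a, a', hne, hM⟩
      have hvz : v j x = 0 := by simp only [hv]; rw [dif_neg h]; rfl
      rw [hvz, hM, std_mul_rho_mul]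
      simp only [Complex.normSq_zero, zero_mul]
      split_ifs with hc
      · have : b * (starRingEnd ℂ) b * ρ a' a' = (Complex.normSq b : ℂ) * ρ a' a' := by
          rw [← Complex.mul_conj]
        rw [this, psd_diag_re hρ a', ← Complex.ofReal_mul]
        simp only [Complex.ofReal_re]
        exact mul_nonneg (Complex.normSq_nonneg b) (psd_diag_re_nonneg hρ a')
      · simp
  have h1re : ∀ x, α x ≤ 1 := by
    intro x
    have hs : (1 : ℝ) = ∑ j, (((M j)ᴴ * (M j)) x x).re := by
      have : ((1 : Matrix (Fin d) (Fin d) ℂ) x x) = ∑ j, ((M j)ᴴ * (M j)) x x := by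
        rw [← h1]; simp [Matrix.sum_apply]
      have := congrArg Complex.re this
      simpa [Complex.re_sum] using this
    rw [hs, hα]
    refine Finset.sum_le_sum fun j _ => ?_
    by_cases h : (M j).IsDiag
    · rw [diag_conj_mul _ h]
      simp only [hv, dif_pos h]
      rw [mul_comm, Complex.mul_conj]
      simp
    · rcases (hkind j).resolve_left h with ⟨b, a, a', hne, hM⟩
      have hvz : v j x = 0 := by simp only [hv]; rw [dif_neg h]; rfl
      rw [hvz, hM, std_conj_mul]
      simp only [Complex.normSq_zero]
      split_ifs with hc
      · rw [mul_comm, Complex.mul_conj]; simp [Complex.normSq_nonneg]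
      · simp
  have hq : ∀ x, α x ≤ min ((σ x x).re / (ρ x x).re) 1 :=
    fun x => le_min ((le_div_iff₀ (hρpos x)).mpr (hσre x)) (h1re x)
  have hQ : (Matrix.of fun x x' : Fin d =>
        if x = x' then ((min ((σ x x).re / (ρ x x).re) 1 : ℝ) : ℂ)
        else σ x x' / ρ x x')
      = A + Matrix.diagonal (fun x => ((min ((σ x x).re / (ρ x x).re) 1 - α x : ℝ) : ℂ)) := by
    ext x x'
    by_cases hxx : x = x'
    · subst hxx
      simp [Matrix.diagonal_apply_eq, hAxx x]
      try (push_cast; ring)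
    · simp [hxx, Matrix.diagonal_apply_ne _ hxx, hoffd x x' hxx]
  rw [hQ]
  refine (gram_psd v).add (Matrix.PosSemidef.diagonal fun x => ?_)
  show (0:ℂ) ≤ _
  rw [Complex.zero_le_real]
  linarith [hq x]

lemma backward_dir (d : ℕ) (hd : 2 ≤ d) (ρ σ : Matrix (Fin d) (Fin d) ℂ)
    (hρ : ρ.PosSemidef) (hρt : ρ.trace = 1) (hσ : σ.PosSemidef) (hσt : σ.trace = 1)
    (hoff : ∀ x x', x ≠ x' → ρ x x' ≠ 0)
    (hQ : (Matrix.of fun x x' : Fin d =>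
        if x = x' then ((min ((σ x x).re / (ρ x x).re) 1 : ℝ) : ℂ)
        else σ x x' / ρ x x').PosSemidef) :
    (∃ (n : ℕ) (M : Fin n → Matrix (Fin d) (Fin d) ℂ),
        (∑ j, (M j)ᴴ * M j = 1) ∧
        (∀ j, (M j).IsDiag ∨
          ∃ (b : ℂ) (x x' : Fin d), x ≠ x' ∧ M j = Matrix.single x x' b) ∧
        (∑ j, M j * ρ * (M j)ᴴ) = σ) := by
  classical
  have hnt : Nontrivial (Fin d) := Fin.nontrivial_iff_two_le.mpr hd
  have hρpos : ∀ x, 0 < (ρ x x).re := by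
    intro x
    rcases (psd_diag_re_nonneg hρ x).lt_or_eq with h | h
    · exact h
    · exfalso
      have hzz : ρ x x = 0 := by rw [psd_diag_re hρ x, ← h]; simp
      obtain ⟨y, hy⟩ := exists_ne x
      exact hoff y x hy (psd_row_zero hρ x hzz y)
  set q : Fin d → ℝ := fun x => min ((σ x x).re / (ρ x x).re) 1 with hqdef
  have hq0 : ∀ x, 0 ≤ q x := fun x =>
    le_min (div_nonneg (psd_diag_re_nonneg hσ x) (hρpos x).le) zero_le_one
  have hq1 : ∀ x, q x ≤ 1 := fun x => min_le_right _ _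
  have hqρ : ∀ x, q x * (ρ x x).re ≤ (σ x x).re := fun x =>
    (le_div_iff₀ (hρpos x)).mp (min_le_left _ _)
  set s : Fin d → ℝ := fun x => 1 - q x with hsdef
  set t : Fin d → ℝ := fun x => (σ x x).re - q x * (ρ x x).re with htdef
  have hs0 : ∀ x, 0 ≤ s x := fun x => by simp [hsdef]; linarith [hq1 x]
  have ht0 : ∀ x, 0 ≤ t x := fun x => by simp [htdef]; linarith [hqρ x]
  have hρtr : ∑ x, (ρ x x).re = 1 := by
    have := congrArg Complex.re hρt
    simpa [Matrix.trace, Matrix.diag, Complex.re_sum] using this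
  have hσtr : ∑ x, (σ x x).re = 1 := by
    have := congrArg Complex.re hσt
    simpa [Matrix.trace, Matrix.diag, Complex.re_sum] using this
  set W : ℝ := ∑ x, s x * (ρ x x).re with hWdef
  have hTW : ∑ x, t x = W := by
    simp only [htdef, hWdef, hsdef, sub_mul, one_mul]
    rw [Finset.sum_sub_distrib, Finset.sum_sub_distrib, hρtr, hσtr]
  have hW0 : 0 ≤ W := Finset.sum_nonneg fun x _ => mul_nonneg (hs0 x) (hρpos x).le
  set c : Fin d → Fin d → ℝ := fun a b => t a * s b / W with hcdef
  have hc0 : ∀ a b, 0 ≤ c a b := fun a b =>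
    div_nonneg (mul_nonneg (ht0 a) (hs0 b)) hW0
  have hWzero_s : W = 0 → ∀ x, s x = 0 := by
    intro hW x
    have hterm : s x * (ρ x x).re = 0 := by
      refine (Finset.sum_eq_zero_iff_of_nonneg
        (fun y (_ : y ∈ Finset.univ) => mul_nonneg (hs0 y) (hρpos y).le)).mp ?_ x
        (Finset.mem_univ x)
      rw [← hWdef, hW]
    rcases mul_eq_zero.mp hterm with h | h
    · exact h
    · exact absurd h (hρpos x).ne'
  have hcsum₁ : ∀ y, ∑ a, c a y = s y := by
    intro y
    by_cases hW : W = 0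
    · have hsy : s y = 0 := hWzero_s hW y
      simp [hcdef, hsy, hW]
    · simp only [hcdef]
      rw [← Finset.sum_div, ← Finset.sum_mul, hTW, mul_comm, mul_div_assoc,
        div_self hW, mul_one]
  have hWzero_t : W = 0 → ∀ x, t x = 0 := by
    intro hW x
    have h := hTW
    rw [hW] at h
    exact (Finset.sum_eq_zero_iff_of_nonneg (fun y _ => ht0 y)).mp h x (Finset.mem_univ x)
  have hcsum₂ : ∀ a, ∑ b, c a b * (ρ b b).re = t a := by
    intro a
    by_cases hW : W = 0
    · simp [hcdef, hW, hWzero_t hW a]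
    · simp only [hcdef, div_mul_eq_mul_div, mul_assoc]
      rw [← Finset.sum_div, ← Finset.mul_sum, ← hWdef, mul_div_assoc, div_self hW, mul_one]
    -- the matrix Q
  set Qm : Matrix (Fin d) (Fin d) ℂ := Matrix.of (fun x x' : Fin d =>
      if x = x' then ((q x : ℝ) : ℂ) else σ x x' / ρ x x') with hQmdef
  have hQm : Qm.PosSemidef := hQ
  obtain ⟨S, hSeq⟩ := psd_exists_sqrt hQm
  have hSS : ∀ x x', ∑ k, (starRingEnd ℂ) (S k x) * S k x' = Qm x x' := by
    intro x x'
    have : (Sᴴ * S) x x' = ∑ k, (starRingEnd ℂ) (S k x) * S k x' := by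
      rw [Matrix.mul_apply]; simp [conjTranspose_apply]
    rw [← this, hSeq, star_eq_conjTranspose]
  -- Kraus operators
  set D : Fin d → Matrix (Fin d) (Fin d) ℂ :=
    fun k => Matrix.diagonal (fun y => (starRingEnd ℂ) (S k y)) with hDdef
  set E : Fin d × Fin d → Matrix (Fin d) (Fin d) ℂ :=
    fun p => Matrix.single p.1 p.2 ((Real.sqrt (c p.1 p.2) : ℝ) : ℂ) with hEdef
  have hblock1 : (∑ k : Fin d, (D k)ᴴ * (D k)) = Matrix.diagonal (fun x => ((q x : ℝ) : ℂ)) := by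
    ext x x'
    rw [Matrix.sum_apply]
    have hper : ∀ k, ((D k)ᴴ * D k) x x' = (starRingEnd ℂ) ((D k) x x) * (D k) x x' :=
      fun k => diag_conj_mul _ (Matrix.isDiag_diagonal _) x x'
    by_cases hxx : x = x'
    · subst hxx
      rw [Matrix.diagonal_apply_eq]
      rw [Finset.sum_congr rfl (fun k _ => hper k)]
      have hQxx : Qm x x = ((q x : ℝ) : ℂ) := by simp [hQmdef]
      rw [← hQxx, ← hSS x x]
      refine Finset.sum_congr rfl fun k _ => ?_
      simp only [hDdef, Matrix.diagonal_apply_eq, Complex.conj_conj]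
      ring
    · rw [Matrix.diagonal_apply_ne _ hxx]
      refine Finset.sum_eq_zero fun k _ => ?_
      rw [hper k]
      simp [hDdef, Matrix.diagonal_apply_ne _ hxx]
  have hblock2 : (∑ p : Fin d × Fin d, (E p)ᴴ * (E p))
      = Matrix.diagonal (fun x => ((s x : ℝ) : ℂ)) := by
    ext x x'
    rw [Matrix.sum_apply, Fintype.sum_prod_type]
    have hper : ∀ a b : Fin d, ((E (a, b))ᴴ * E (a, b)) x x'
        = if x = b ∧ x' = b then ((c a b : ℝ) : ℂ) else 0 := by
      intro a b
      rw [hEdef]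
      rw [std_conj_mul]
      congr 1
      rw [Complex.conj_ofReal, ← Complex.ofReal_mul, Real.mul_self_sqrt (hc0 a b)]
    rw [Finset.sum_congr rfl (fun a _ => Finset.sum_congr rfl (fun b _ => hper a b))]
    by_cases hxx : x = x'
    · subst hxx
      rw [Matrix.diagonal_apply_eq]
      simp only [and_self]
      rw [Finset.sum_congr rfl (fun a (_ : a ∈ Finset.univ) =>
        Finset.sum_ite_eq Finset.univ x (fun b => ((c a b : ℝ) : ℂ)))]
      simp only [Finset.mem_univ, if_pos]
      rw [← Complex.ofReal_sum]
      rw [hcsum₁ x]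
    · rw [Matrix.diagonal_apply_ne _ hxx]
      refine Finset.sum_eq_zero fun a _ => Finset.sum_eq_zero fun b _ => ?_
      rw [if_neg]
      rintro ⟨rfl, rfl⟩; exact hxx rfl
  have hblock3 : (∑ k : Fin d, (D k) * ρ * (D k)ᴴ)
      = Matrix.of (fun x x' => Qm x x' * ρ x x') := by
    ext x x'
    rw [Matrix.sum_apply]
    have hper : ∀ k, ((D k) * ρ * (D k)ᴴ) x x'
        = (starRingEnd ℂ) (S k x) * S k x' * ρ x x' := by
      intro k
      rw [diag_mul_rho_mul _ _ (Matrix.isDiag_diagonal _) x x']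
      simp only [hDdef, Matrix.diagonal_apply_eq, Complex.conj_conj]
      ring
    rw [Finset.sum_congr rfl (fun k _ => hper k), ← Finset.sum_mul, hSS x x']
    simp
  have hblock4 : (∑ p : Fin d × Fin d, (E p) * ρ * (E p)ᴴ)
      = Matrix.diagonal (fun x => ((t x : ℝ) : ℂ)) := by
    ext x x'
    rw [Matrix.sum_apply, Fintype.sum_prod_type]
    have hper : ∀ a b : Fin d, ((E (a, b)) * ρ * (E (a, b))ᴴ) x x'
        = if x = a ∧ x' = a then ((c a b : ℝ) : ℂ) * ρ b b else 0 := by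
      intro a b
      rw [hEdef]
      rw [std_mul_rho_mul]
      congr 1
      rw [Complex.conj_ofReal, ← Complex.ofReal_mul, Real.mul_self_sqrt (hc0 a b)]
    rw [Finset.sum_congr rfl (fun a _ => Finset.sum_congr rfl (fun b _ => hper a b))]
    by_cases hxx : x = x'
    · subst hxx
      rw [Matrix.diagonal_apply_eq]
      simp only [and_self]
      have hrow : ∀ a : Fin d, (∑ b, if x = a then ((c a b : ℝ) : ℂ) * ρ b b else 0)
          = if x = a then ((t a : ℝ) : ℂ) else 0 := by
        intro a
        by_cases hxa : x = a
        · simp only [if_pos hxa]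
          rw [← hcsum₂ a, Complex.ofReal_sum]
          refine Finset.sum_congr rfl fun b _ => ?_
          rw [Complex.ofReal_mul, ← psd_diag_re hρ b]
        · simp [hxa]
      rw [Finset.sum_congr rfl (fun a (_ : a ∈ Finset.univ) => hrow a)]
      rw [Finset.sum_ite_eq Finset.univ x (fun a => ((t a : ℝ) : ℂ))]
      simp
    · rw [Matrix.diagonal_apply_ne _ hxx]
      refine Finset.sum_eq_zero fun a _ => Finset.sum_eq_zero fun b _ => ?_
      rw [if_neg]
      rintro ⟨rfl, rfl⟩; exact hxx rfl
  -- assemble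
  set F : (Fin d ⊕ Fin d × Fin d) → Matrix (Fin d) (Fin d) ℂ := Sum.elim D E with hFdef
  set e : (Fin d ⊕ Fin d × Fin d) ≃ Fin (d + d * d) :=
    (Equiv.sumCongr (Equiv.refl (Fin d)) finProdFinEquiv).trans finSumFinEquiv with hedef
  refine ⟨d + d * d, fun j => F (e.symm j), ?_, ?_, ?_⟩
  · rw [Fintype.sum_equiv e.symm (fun j => (F (e.symm j))ᴴ * F (e.symm j))
      (fun i => (F i)ᴴ * F i) (fun j => rfl)]
    rw [Fintype.sum_sum_type]
    simp only [hFdef, Sum.elim_inl, Sum.elim_inr]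
    rw [hblock1, hblock2, Matrix.diagonal_add]
    ext x x'
    by_cases hxx : x = x'
    · subst hxx
      rw [Matrix.diagonal_apply_eq, Matrix.one_apply_eq]
      push_cast
      simp [hsdef]
    · rw [Matrix.diagonal_apply_ne _ hxx, Matrix.one_apply_ne hxx]
  · intro j
    show (F (e.symm j)).IsDiag ∨ ∃ (b : ℂ) (x x' : Fin d), x ≠ x' ∧
      F (e.symm j) = Matrix.single x x' b
    rcases e.symm j with k | ⟨a, b⟩
    · simp only [hFdef, Sum.elim_inl, hDdef]
      exact Or.inl (Matrix.isDiag_diagonal _)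
    · simp only [hFdef, Sum.elim_inr]
      by_cases hab : a = b
      · refine Or.inl ?_
        intro i j' hij
        simp only [hFdef, Sum.elim_inr, hEdef]
        rw [Matrix.single_apply_of_ne]
        rintro ⟨rfl, rfl⟩
        exact hij hab
      · exact Or.inr ⟨((Real.sqrt (c a b) : ℝ) : ℂ), a, b, hab, rfl⟩
  · rw [Fintype.sum_equiv e.symm (fun j => F (e.symm j) * ρ * (F (e.symm j))ᴴ)
      (fun i => F i * ρ * (F i)ᴴ) (fun j => rfl)]
    rw [Fintype.sum_sum_type]
    simp only [hFdef, Sum.elim_inl, Sum.elim_inr]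
    rw [hblock3, hblock4]
    ext x x'
    by_cases hxx : x = x'
    · subst hxx
      rw [Matrix.add_apply, Matrix.of_apply, Matrix.diagonal_apply_eq]
      rw [hQmdef]
      simp only [Matrix.of_apply, if_pos rfl]
      rw [psd_diag_re hρ x, psd_diag_re hσ x]
      rw [htdef]
      push_cast
      ring
    · rw [Matrix.add_apply, Matrix.of_apply, Matrix.diagonal_apply_ne _ hxx]
      rw [hQmdef]
      simp only [Matrix.of_apply, if_neg hxx]
      rw [div_mul_cancel₀ _ (hoff x x' hxx), add_zero]

/-- For density matrices `ρ, σ` with all off-diagonal entries of `ρ` nonzero,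
there is an N-covariant channel (Kraus operators diagonal or multiples of
off-diagonal matrix units) mapping `ρ` to `σ` iff the matrix `Q` with
`Q_{xx} = min{σ_{xx}/ρ_{xx}, 1}` and `Q_{xx'} = σ_{xx'}/ρ_{xx'}` (`x ≠ x'`)
is positive semidefinite. -/
theorem stmt_18 (d : ℕ) (hd : 2 ≤ d) (ρ σ : Matrix (Fin d) (Fin d) ℂ)
    (hρ : ρ.PosSemidef) (hρt : ρ.trace = 1) (hσ : σ.PosSemidef) (hσt : σ.trace = 1)
    (hoff : ∀ x x', x ≠ x' → ρ x x' ≠ 0) :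
    (∃ (n : ℕ) (M : Fin n → Matrix (Fin d) (Fin d) ℂ),
        (∑ j, (M j)ᴴ * M j = 1) ∧
        (∀ j, (M j).IsDiag ∨
          ∃ (b : ℂ) (x x' : Fin d), x ≠ x' ∧ M j = Matrix.single x x' b) ∧
        (∑ j, M j * ρ * (M j)ᴴ) = σ) ↔
    (Matrix.of fun x x' : Fin d =>
        if x = x' then ((min ((σ x x).re / (ρ x x).re) 1 : ℝ) : ℂ)
        else σ x x' / ρ x x').PosSemidef := by
  constructor
  · rintro ⟨n, M, h1, hkind, h2⟩
    exact forward_dir d hd ρ σ hρ hσ hoff n M h1 hkind h2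
  · intro hQ
    exact backward_dir d hd ρ σ hρ hρt hσ hσt hoff hQ
end
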